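/- arXiv:1707.06106 — 10 statements merged into one kernel-verified Lean document; each statement's English description precedes it below -/
import Mathlib

section
/- Every degree-zero derivation of the Witt algebra is inner: if D: W → W is a derivation satisfying D(e_i) = ψ_i e_i for scalars ψ_i ∈ K, then there is x ∈ W with D = ad_x; in fact D = ad_{ψ_1 e_0} and after subtracting this inner derivation all coefficients ψ_i vanish. -/
/-- Every degree-zero derivation of the Witt algebra is inner: if `D e_i = ψ_i • e_i`
then `D = ad_{ψ_1 • e_0}`; in particular `D` is inner and, after subtracting this
inner derivation, all coefficients vanish. -/
theorem witt_degree_zero_derivation_inner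
    (K : Type*) [Field K] [CharZero K]
    (W : Type*) [LieRing W] [LieAlgebra K W]
    (e : Module.Basis ℤ K W)
    (hbr : ∀ n m : ℤ, ⁅e n, e m⁆ = ((m - n : ℤ) : K) • e (n + m))
    (D : W →ₗ[K] W)
    (hD : ∀ x y : W, D ⁅x, y⁆ = ⁅D x, y⁆ + ⁅x, D y⁆)
    (ψ : ℤ → K)
    (hdeg : ∀ i : ℤ, D (e i) = ψ i • e i) :
    (∀ y : W, D y = ⁅ψ 1 • e 0, y⁆) ∧
    (∃ x : W, ∀ y : W, D y = ⁅x, y⁆) ∧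
    (∀ i : ℤ, D (e i) - ⁅ψ 1 • e 0, e i⁆ = 0) := by
  -- additivity of ψ on distinct indices
  have key : ∀ n m : ℤ, n ≠ m → ψ (n + m) = ψ n + ψ m := by
    intro n m hnm
    have h := hD (e n) (e m)
    rw [hbr, map_smul, hdeg, hdeg, hdeg, smul_lie, lie_smul, hbr] at h
    rw [smul_smul, smul_smul, smul_smul, ← add_smul] at h
    have hmn : ((m - n : ℤ) : K) ≠ 0 := by
      exact_mod_cast sub_ne_zero.mpr (fun hh => hnm hh.symm)
    have h2 : (((m - n : ℤ) : K) * ψ (n + m)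
        - (ψ n * ((m - n : ℤ) : K) + ψ m * ((m - n : ℤ) : K))) • e (n + m) = 0 := by
      rw [sub_smul, h, sub_self]
    rcases smul_eq_zero.mp h2 with h3 | h3
    · have h4 : ((m - n : ℤ) : K) * (ψ (n + m) - (ψ n + ψ m)) = 0 := by
        linear_combination h3
      rcases mul_eq_zero.mp h4 with h5 | h5
      · exact absurd h5 hmn
      · exact sub_eq_zero.mp h5
    · exact absurd h3 (e.ne_zero _)
  have hψ0 : ψ 0 = 0 := by
    have h := key 0 1 (by norm_num)
    simpa using h.symm
  have hneg : ∀ n : ℤ, n ≠ 0 → ψ (-n) = -ψ n := by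
    intro n hn
    have h := key n (-n) (by omega)
    simp at h
    rw [hψ0] at h
    linear_combination -h
  have hdouble : ∀ n : ℤ, n ≠ 0 → ψ (2 * n) = 2 * ψ n := by
    intro n hn
    have h1 := key n (3 * n) (by omega)
    have h2 := key n (2 * n) (by omega)
    have h3 := key (-n) (5 * n) (by omega)
    have h4 := key (2 * n) (3 * n) (by omega)
    have hne := hneg n hn
    have r1 : n + 3 * n = 4 * n := by ring
    have r2 : n + 2 * n = 3 * n := by ring
    have r3 : -n + 5 * n = 4 * n := by ring
    have r4 : 2 * n + 3 * n = 5 * n := by ring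
    rw [r1] at h1; rw [r2] at h2; rw [r3] at h3; rw [r4] at h4
    linear_combination h1 - h3 - h4 - hne
  have hψ : ∀ i : ℤ, ψ i = (i : K) * ψ 1 := by
    intro i
    induction i using Int.induction_on with
    | zero => simpa using hψ0
    | succ k ih =>
      by_cases hk : (k : ℤ) = 1
      · rw [hk]
        have h2 := hdouble 1 (by norm_num)
        norm_num at h2 ⊢
        linear_combination h2
      · have h := key 1 k (fun hh => hk hh.symm)
        rw [add_comm] at h
        rw [h, ih]
        push_cast
        ring
    | pred k ih =>
      by_cases hk : (k : ℤ) = 1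
      · rw [hk]
        have h2 := hdouble (-1) (by norm_num)
        have hne := hneg 1 (by norm_num)
        norm_num at h2 hne ⊢
        linear_combination h2 + 2 * hne
      · have h := key (-k) (-1) (by omega)
        rw [show (-(k : ℤ) + -1) = -(k : ℤ) - 1 by ring] at h
        have hne := hneg 1 (by norm_num)
        rw [h, ih, hne]
        push_cast
        ring
  have hadE : ∀ i : ℤ, ⁅ψ 1 • e 0, e i⁆ = D (e i) := by
    intro i
    rw [smul_lie, hbr, hdeg, smul_smul, hψ i]
    norm_num [mul_comm]
  have main : ∀ y : W, D y = ⁅ψ 1 • e 0, y⁆ := by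
    have : D = (LieAlgebra.ad K W (ψ 1 • e 0)) := e.ext fun i => by
      rw [LieAlgebra.ad_apply, hadE]
    intro y
    rw [this, LieAlgebra.ad_apply]
  exact ⟨main, ⟨ψ 1 • e 0, main⟩, fun i => by rw [main (e i), sub_self]⟩
end

section
/- If ψ_i ∈ K (i ∈ ℤ) satisfy (j - i)(ψ_{i+j} - ψ_i - ψ_j) = 0 for all i, j ∈ ℤ and ψ_1 = 0, then ψ_i = 0 for all i ∈ ℤ. -/
/-- Coefficient form of the normalized degree-zero 1-cocycle condition for the Witt
algebra: if `(j - i)(ψ_{i+j} - ψ_i - ψ_j) = 0` for all `i, j` and `ψ_1 = 0`,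
then `ψ = 0`. -/
theorem witt_one_cocycle_coefficients_vanish
    (K : Type*) [Field K] [CharZero K]
    (ψ : ℤ → K)
    (hcoc : ∀ i j : ℤ, ((j - i : ℤ) : K) * (ψ (i + j) - ψ i - ψ j) = 0)
    (hnorm : ψ 1 = 0) :
    ∀ i : ℤ, ψ i = 0 := by
  have h : ∀ i j : ℤ, i ≠ j → ψ (i + j) = ψ i + ψ j := by
    intro i j hij
    have hne : ((j - i : ℤ) : K) ≠ 0 := by
      exact_mod_cast sub_ne_zero.mpr (Ne.symm hij)
    have := mul_eq_zero.mp (hcoc i j)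
    rcases this with h' | h'
    · exact absurd h' hne
    · linear_combination h'
  have h0 : ψ 0 = 0 := by
    have := h 0 1 (by norm_num)
    simp [hnorm] at this
    exact this.symm
  have hm1 : ψ (-1) = 0 := by
    have := h (-1) 1 (by norm_num)
    simp [hnorm, h0] at this
    exact this.symm
  have h3 : ψ 3 = ψ 2 := by
    have := h 1 2 (by norm_num)
    norm_num [hnorm] at this
    exact this
  have h4 : ψ 4 = ψ 2 := by
    have := h 1 3 (by norm_num)
    norm_num [hnorm, h3] at this
    exact this
  have h5 : ψ 5 = ψ 2 := by
    have := h 1 4 (by norm_num)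
    norm_num [hnorm, h4] at this
    exact this
  have h2 : ψ 2 = 0 := by
    have := h 2 3 (by norm_num)
    norm_num [h3, h5] at this
    exact this
  have hm2 : ψ (-2) = 0 := by
    have := h (-2) 2 (by norm_num)
    norm_num [h0, h2] at this
    exact this.symm
  intro i
  induction i using Int.induction_on with
  | zero => exact h0
  | succ n ih =>
    rcases eq_or_ne (n : ℤ) 1 with hn | hn
    · rw [hn]; exact h2
    · have := h n 1 hn
      rw [this, ih, hnorm, add_zero]
  | pred n ih =>
    rcases eq_or_ne (-(n : ℤ)) (-1) with hn | hn
    · have : -(n : ℤ) - 1 = -2 := by omega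
      rw [this]; exact hm2
    · have := h (-n) (-1) hn
      rw [show (-(n:ℤ) + -1) = -(n:ℤ) - 1 by ring] at this
      rw [this, ih, hm1, add_zero]
end

section
/- The first cohomology of the Witt algebra with values in the adjoint module vanishes: H^1(W, W) = 0. Equivalently, every derivation of the Witt algebra is inner. -/
set_option linter.unusedSectionVars false

section WittAux

variable {K : Type*} [Field K] [CharZero K]
  {W : Type*} [LieRing W] [LieAlgebra K W]

/-- A function on `ℤ` additive off the diagonal is linear. -/
lemma witt_off_diag_additive (v : ℤ → K)
    (h : ∀ n m : ℤ, n ≠ m → v (n + m) = v n + v m) (n : ℤ) :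
    v n = (n : K) * v 1 := by
  set g : ℤ → K := fun n => v n - (n : K) * v 1 with hg
  suffices hs : ∀ n : ℤ, g n = 0 by
    have := hs n
    simp only [hg, sub_eq_zero] at this
    exact this
  clear n
  have hadd : ∀ n m : ℤ, n ≠ m → g (n + m) = g n + g m := by
    intro n m hnm
    simp only [hg]
    rw [h n m hnm]
    push_cast
    ring
  have h1 : g 1 = 0 := by simp [hg]
  have h0 : g 0 = 0 := by
    have h' := hadd 0 1 (by norm_num)
    rw [zero_add, h1, add_zero] at h'
    exact h'.symm
  have hm1 : g (-1) = 0 := by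
    have h' := hadd (-1) 1 (by norm_num)
    norm_num at h'
    rw [h0, h1] at h'
    linear_combination -h'
  have gup : ∀ n : ℤ, n ≠ 1 → g (n + 1) = g n := by
    intro n hn
    rw [hadd n 1 hn, h1, add_zero]
  have gdown : ∀ n : ℤ, n ≠ -1 → g (n + -1) = g n := by
    intro n hn
    rw [hadd n (-1) hn, hm1, add_zero]
  have chup : ∀ k : ℕ, g (2 + k) = g 2 := by
    intro k
    induction k with
    | zero => norm_num
    | succ k ih =>
      have harg : (2 + ((k : ℕ) + 1 : ℕ) : ℤ) = (2 + (k : ℕ)) + 1 := by push_cast; ring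
      rw [harg, gup _ (by omega)]
      exact ih
  have chdown : ∀ k : ℕ, g (-2 - k) = g (-2) := by
    intro k
    induction k with
    | zero => norm_num
    | succ k ih =>
      have harg : (-2 - ((k : ℕ) + 1 : ℕ) : ℤ) = (-2 - (k : ℕ)) + -1 := by push_cast; ring
      rw [harg, gdown _ (by omega)]
      exact ih
  have hm2 : g (-2) = 0 := by
    have h6 : g 6 = g 2 := by
      have := chup 4; norm_num at this; exact this
    have h4 : g (-4) = g (-2) := by
      have := chdown 2; norm_num at this; exact this
    have h' := hadd 6 (-4) (by norm_num)
    norm_num at h'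
    rw [h6, h4] at h'
    linear_combination -h'
  have h2 : g 2 = 0 := by
    have h6 : g (-6) = g (-2) := by
      have := chdown 4; norm_num at this; exact this
    have h4 : g 4 = g 2 := by
      have := chup 2; norm_num at this; exact this
    have h' := hadd (-6) 4 (by norm_num)
    norm_num at h'
    rw [h6, h4] at h'
    linear_combination -h'
  intro n
  by_cases hge : 2 ≤ n
  · obtain ⟨k, rfl⟩ : ∃ k : ℕ, n = 2 + k := ⟨(n - 2).toNat, by omega⟩
    rw [chup, h2]
  · by_cases hle : n ≤ -2
    · obtain ⟨k, rfl⟩ : ∃ k : ℕ, n = -2 - k := ⟨(-2 - n).toNat, by omega⟩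
      rw [chdown, hm2]
    · push_neg at hge hle
      interval_cases n
      · exact hm1
      · exact h0
      · exact h1

lemma witt_repr_bracket_right (e : Module.Basis ℤ K W)
    (hbr : ∀ n m : ℤ, ⁅e n, e m⁆ = ((m - n : ℤ) : K) • e (n + m))
    (n q : ℤ) (y : W) :
    e.repr ⁅e n, y⁆ q = ((q - 2 * n : ℤ) : K) * e.repr y (q - n) := by
  have hmap :
      (Finsupp.lapply q ∘ₗ (e.repr : W →ₗ[K] (ℤ →₀ K)) ∘ₗ
          (LieAlgebra.ad K W (e n) : W →ₗ[K] W))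
        = ((q - 2 * n : ℤ) : K) •
            (Finsupp.lapply (q - n) ∘ₗ (e.repr : W →ₗ[K] (ℤ →₀ K))) := by
    apply e.ext
    intro p
    simp only [LinearMap.comp_apply, LinearMap.smul_apply, LieAlgebra.ad_apply,
      Finsupp.lapply_apply]
    rw [hbr n p]
    simp only [map_smul, LinearEquiv.coe_coe, Module.Basis.repr_self, Finsupp.smul_apply,
      Finsupp.single_apply, smul_eq_mul]
    by_cases hpq : n + p = q
    · rw [if_pos hpq, if_pos (by omega : p = q - n)]
      have hco : ((p - n : ℤ) : K) = ((q - 2 * n : ℤ) : K) := by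
        congr 1; omega
      rw [hco]
    · rw [if_neg hpq, if_neg (by omega : ¬ p = q - n)]
      ring
  have := LinearMap.congr_fun hmap y
  simpa using this

lemma witt_repr_bracket_left (e : Module.Basis ℤ K W)
    (hbr : ∀ n m : ℤ, ⁅e n, e m⁆ = ((m - n : ℤ) : K) • e (n + m))
    (m q : ℤ) (x : W) :
    e.repr ⁅x, e m⁆ q = ((2 * m - q : ℤ) : K) * e.repr x (q - m) := by
  rw [← lie_skew, map_neg, Finsupp.neg_apply, witt_repr_bracket_right e hbr m q x]
  push_cast
  ring

lemma witt_E (e : Module.Basis ℤ K W)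
    (hbr : ∀ n m : ℤ, ⁅e n, e m⁆ = ((m - n : ℤ) : K) • e (n + m))
    (D : W →ₗ[K] W) (hD : ∀ x y : W, D ⁅x, y⁆ = ⁅D x, y⁆ + ⁅x, D y⁆)
    (n m q : ℤ) :
    ((m - n : ℤ) : K) * e.repr (D (e (n + m))) q
      = ((2 * m - q : ℤ) : K) * e.repr (D (e n)) (q - m)
        + ((q - 2 * n : ℤ) : K) * e.repr (D (e m)) (q - n) := by
  have h := hD (e n) (e m)
  rw [hbr n m, map_smul] at h
  have h2 := congrArg (fun z => e.repr z q) h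
  simp only [map_smul, map_add, Finsupp.smul_apply, Finsupp.add_apply, smul_eq_mul] at h2
  rw [witt_repr_bracket_left e hbr m q (D (e n)),
    witt_repr_bracket_right e hbr n q (D (e m))] at h2
  exact h2

end WittAux

/-- `H^1(W, W) = 0`: every (algebraic, not necessarily continuous) derivation of the
Witt algebra is inner. -/
theorem witt_H1_adjoint_vanishes
    (K : Type*) [Field K] [CharZero K]
    (W : Type*) [LieRing W] [LieAlgebra K W]
    (e : Module.Basis ℤ K W)
    (hbr : ∀ n m : ℤ, ⁅e n, e m⁆ = ((m - n : ℤ) : K) • e (n + m)) :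
    ∀ D : W →ₗ[K] W, (∀ x y : W, D ⁅x, y⁆ = ⁅D x, y⁆ + ⁅x, D y⁆) →
      ∃ w : W, ∀ x : W, D x = ⁅w, x⁆ := by
  intro D hD
  have E := witt_E e hbr D hD
  -- diagonal coefficients
  have hdiag : ∀ n : ℤ, e.repr (D (e n)) n = (n : K) * e.repr (D (e 1)) 1 := by
    refine witt_off_diag_additive (fun n => e.repr (D (e n)) n) ?_
    intro n m hnm
    have h := E n m (n + m)
    rw [show n + m - m = n by ring, show n + m - n = m by ring] at h
    have hcast : ((m - n : ℤ) : K) ≠ 0 := by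
      rw [Int.cast_ne_zero]; omega
    apply mul_left_cancel₀ hcast
    rw [h]
    have e1 : ((2 * m - (n + m) : ℤ) : K) = ((m - n : ℤ) : K) := by congr 1; ring
    have e2 : ((n + m - 2 * n : ℤ) : K) = ((m - n : ℤ) : K) := by congr 1; ring
    rw [e1, e2]
    ring
  -- off-diagonal coefficients
  have hoff : ∀ n s : ℤ, s ≠ 0 →
      ((s : ℤ) : K) * e.repr (D (e n)) (n + s)
        = -(((n - s : ℤ) : K)) * e.repr (D (e 0)) s := by
    intro n s hs
    have h := E 0 n (n + s)
    rw [zero_add, show n + s - n = s by ring, show n + s - 0 = n + s by ring] at h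
    push_cast at h ⊢
    linear_combination -h
  -- the inner element
  have hGsupp : ∀ s : ℤ,
      (if s = 0 then e.repr (D (e 1)) 1 else -(e.repr (D (e 0)) s) / (s : K)) ≠ 0 →
      s ∈ (e.repr (D (e 0))).support ∪ {0} := by
    intro s hs
    by_cases h0 : s = 0
    · simp [h0]
    · rw [if_neg h0] at hs
      have hc0 : e.repr (D (e 0)) s ≠ 0 := by
        intro hzz
        apply hs
        rw [hzz]
        simp
      simp [Finsupp.mem_support_iff, hc0]
  set g : ℤ →₀ K := Finsupp.onFinset _ _ hGsupp with hgdef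
  refine ⟨e.repr.symm g, ?_⟩
  have key : ∀ n : ℤ, D (e n) = ⁅e.repr.symm g, e n⁆ := by
    intro n
    apply e.repr.injective
    ext q
    rw [witt_repr_bracket_left e hbr n q, LinearEquiv.apply_symm_apply]
    have hgq : g (q - n) =
        (if q - n = 0 then e.repr (D (e 1)) 1 else -(e.repr (D (e 0)) (q - n)) / ((q - n : ℤ) : K)) :=
      rfl
    rw [hgq]
    by_cases hs : q - n = 0
    · rw [if_pos hs]
      have hqn : q = n := by omega
      rw [hqn, hdiag n]
      have hco : ((2 * n - n : ℤ) : K) = (n : K) := by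
        have : (2 * n - n : ℤ) = n := by ring
        rw [this]
      rw [hco]
    · rw [if_neg hs]
      have h := hoff n (q - n) hs
      rw [show n + (q - n) = q by ring] at h
      have hS : ((q - n : ℤ) : K) ≠ 0 := Int.cast_ne_zero.mpr hs
      rw [mul_div_assoc', eq_div_iff hS]
      push_cast at h ⊢
      linear_combination h
  have hDeq : D = (LieAlgebra.ad K W (e.repr.symm g) : W →ₗ[K] W) := by
    apply e.ext
    intro n
    rw [key n, LieAlgebra.ad_apply]
  intro x
  rw [hDeq, LieAlgebra.ad_apply]
end

section
/- Every degree-zero 3-cocycle ψ of the Witt algebra with values in the adjoint module is cohomologous to a degree-zero 3-cocycle ψ' whose coefficients satisfy: ψ'_{i,j,1} = 0 for all i ≤ 0 and all j ∈ ℤ; ψ'_{i,j,-1} = 0 for all i, j > 0; ψ'_{i,-1,2} = 0 for all i ∈ ℤ; and ψ'_{-4,2,-2} = 0. -/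
set_option linter.unusedSectionVars false
set_option maxHeartbeats 1000000

/-- The 3-cocycle condition for a degree-zero 3-cochain on the Witt algebra, in
coefficient form: `ψ(e_i,e_j,e_k) = ψ_{i,j,k} e_{i+j+k}`. -/
def IsWittCocycle3 {K : Type*} [Field K] (ψ : ℤ → ℤ → ℤ → K) : Prop :=
  ∀ i j k l : ℤ,
    ((j - i : ℤ) : K) * ψ (i + j) k l - ((k - i : ℤ) : K) * ψ (i + k) j l
      + ((l - i : ℤ) : K) * ψ (i + l) j k + ((k - j : ℤ) : K) * ψ (k + j) i l
      - ((l - j : ℤ) : K) * ψ (l + j) i k + ((l - k : ℤ) : K) * ψ (l + k) i j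
      - ((j + k + l - i : ℤ) : K) * ψ j k l + ((i + k + l - j : ℤ) : K) * ψ i k l
      - ((i + j + l - k : ℤ) : K) * ψ i j l + ((i + j + k - l : ℤ) : K) * ψ i j k = 0

/-- The coefficients of the coboundary `δ₂φ` of a degree-zero 2-cochain
`φ(e_i,e_j) = φ_{i,j} e_{i+j}`. -/
def wittCoboundary2 {K : Type*} [Field K] (φ : ℤ → ℤ → K) (i j k : ℤ) : K :=
  ((j - i : ℤ) : K) * φ (i + j) k + ((k - j : ℤ) : K) * φ (k + j) i
    + ((i - k : ℤ) : K) * φ (i + k) j - ((j + k - i : ℤ) : K) * φ j k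
    + ((i + k - j : ℤ) : K) * φ i k - ((i + j - k : ℤ) : K) * φ i j

namespace WittHelper
variable {K : Type*} [Field K] [CharZero K]
noncomputable def Fq (ψ : ℤ → ℤ → ℤ → K) : ℕ → ℤ → ℤ → K
  | 0 => fun _ _ => 0
  | (n+1) => fun i j =>
    if i < j ∧ j ≤ 0 then
      (ψ i j 1 - ((j - 1 : ℤ) : K) * Fq ψ n i (j+1)
        - ((i - 1 : ℤ) : K) * Fq ψ n (i+1) j) / ((1 - i - j : ℤ) : K)
    else 0

noncomputable def Qv (ψ : ℤ → ℤ → ℤ → K) (a b : ℤ) : K := Fq ψ (-(a+b)).toNat a b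

noncomputable def Bc (ψ : ℤ → ℤ → ℤ → K) : ℕ → K
  | 0 => (ψ (-3) (-1) 2 - 6 * Qv ψ (-3) (-1)) / 2
  | (k+1) =>
    (ψ (-4-(k:ℤ)) (-1) 2 - ((-4-(k:ℤ) - 2 : ℤ) : K) * Qv ψ (-4-(k:ℤ)+2) (-1)
      - ((-4-(k:ℤ) + 3 : ℤ) : K) * Bc ψ k + ((-4-(k:ℤ) - 3 : ℤ) : K) * Qv ψ (-4-(k:ℤ)) (-1))
      / ((-1 - (-4-(k:ℤ)) : ℤ) : K)

noncomputable def am2 (ψ : ℤ → ℤ → ℤ → K) : K :=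
  (ψ (-4) 2 (-2) - 4 * Qv ψ (-4) 0 + 2 * Bc ψ 2 + 8 * Qv ψ (-4) (-2)) / 4

noncomputable def Av (ψ : ℤ → ℤ → ℤ → K) (i : ℤ) : K :=
  if i = 0 then (ψ 0 (-1) 2 + 3 * Qv ψ (-1) 0) / 3
  else if i = -1 then 0
  else if i = -2 then am2 ψ
  else if i = -3 then ψ (-2) (-1) 2 - 4 * Qv ψ (-1) 0 - am2 ψ - 5 * Qv ψ (-2) (-1)
  else Bc ψ (-i-4).toNat

noncomputable def Hm (ψ : ℤ → ℤ → ℤ → K) : ℕ → ℤ → K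
  | 0 => fun i => ψ i 2 1 - ((-1 - i : ℤ) : K) * Av ψ i
      - ((i - 1 : ℤ) : K) * (if i = 0 then 0 else Av ψ (i+1))
  | (q+1) => fun i =>
      (ψ i (3+(q:ℤ)) 1 - ((1 - i - (3+(q:ℤ)) : ℤ) : K) * Hm ψ q i
        - ((i - 1 : ℤ) : K) * (if i = 0 then 0 else Hm ψ q (i+1))) / (((q:ℤ)+2 : ℤ) : K)

noncomputable def m1v (ψ : ℤ → ℤ → ℤ → K) (a : ℤ) : K :=
  if a = 2 then 0 else -Hm ψ (a-3).toNat (-1)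

noncomputable def Jstep (ψ : ℤ → ℤ → ℤ → K) (prev : ℤ → K) (n : ℕ) (x : ℤ) : K :=
  if 2 ≤ x ∧ 2*x < (n:ℤ)+5 then
    ( (((n:ℤ)+5-x-x : ℤ) : K) * m1v ψ ((n:ℤ)+5)
      + ((1+((n:ℤ)+5-x) : ℤ) : K) * prev x
      + ((x+1 : ℤ) : K) * prev (x-1)
      - (((n:ℤ)+5-x-1-x : ℤ) : K) * m1v ψ ((n:ℤ)+5-x)
      + ((x-1-((n:ℤ)+5-x) : ℤ) : K) * m1v ψ x
      - ψ x ((n:ℤ)+5-x) (-1) ) / (((n:ℤ)+6 : ℤ) : K)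
  else 0

noncomputable def Jf (ψ : ℤ → ℤ → ℤ → K) : ℕ → ℤ → K
  | 0 => Jstep ψ (fun _ => 0) 0
  | (n+1) => Jstep ψ (Jf ψ n) (n+1)

noncomputable def Jpre (ψ : ℤ → ℤ → ℤ → K) : ℕ → ℤ → K
  | 0 => fun _ => 0
  | (n+1) => Jf ψ n

noncomputable def Pv (ψ : ℤ → ℤ → ℤ → K) (a b : ℤ) : K :=
  if b = 1 ∨ a = 1 then 0
  else if b ≤ 0 then Qv ψ a b
  else if a ≤ 0 then (if b = 2 then Av ψ a else Hm ψ (b-3).toNat a)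
  else Jf ψ (a+b-5).toNat a

noncomputable def Phi (ψ : ℤ → ℤ → ℤ → K) (a b : ℤ) : K :=
  if a < b then Pv ψ a b else if b < a then -Pv ψ b a else 0

variable (ψ : ℤ → ℤ → ℤ → K)

lemma phi_diag (a : ℤ) : Phi ψ a a = 0 := by simp [Phi]

lemma phi_antisym (a b : ℤ) : Phi ψ a b = -Phi ψ b a := by
  rcases lt_trichotomy a b with h|h|h
  · simp [Phi, h, lt_asymm h]
  · subst h; simp [Phi]
  · simp [Phi, h, lt_asymm h]

lemma phi_one_right (a : ℤ) : Phi ψ a 1 = 0 := by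
  rcases lt_trichotomy a 1 with h|h|h
  · simp [Phi, Pv, h]
  · subst h; simp [Phi]
  · simp [Phi, Pv, h, lt_asymm h]

lemma phi_one_left (a : ℤ) : Phi ψ 1 a = 0 := by
  rcases lt_trichotomy (1:ℤ) a with h|h|h
  · simp [Phi, Pv, h, lt_asymm h]
  · rw [← h]; simp [Phi]
  · simp [Phi, Pv, h, lt_asymm h]

lemma phi_quad (a b : ℤ) (h1 : a < b) (h2 : b ≤ 0) : Phi ψ a b = Qv ψ a b := by
  unfold Phi Pv
  rw [if_pos h1, if_neg (by omega : ¬(b = 1 ∨ a = 1)), if_pos h2]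

lemma phi_anchor (a : ℤ) (h : a ≤ 0) : Phi ψ a 2 = Av ψ a := by
  unfold Phi Pv
  rw [if_pos (by omega : a < 2), if_neg (by omega : ¬((2:ℤ) = 1 ∨ a = 1)),
    if_neg (by omega : ¬(2:ℤ) ≤ 0), if_pos h, if_pos rfl]

lemma phi_mixed (a b : ℤ) (ha : a ≤ 0) (hb : 3 ≤ b) : Phi ψ a b = Hm ψ (b-3).toNat a := by
  unfold Phi Pv
  rw [if_pos (by omega : a < b), if_neg (by omega : ¬(b = 1 ∨ a = 1)),
    if_neg (by omega : ¬ b ≤ 0), if_pos ha, if_neg (by omega : ¬ b = 2)]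

lemma phi_int (a b : ℤ) (h2 : 2 ≤ a) (h : a < b) : Phi ψ a b = Jf ψ (a+b-5).toNat a := by
  unfold Phi Pv
  rw [if_pos h, if_neg (by omega : ¬(b = 1 ∨ a = 1)), if_neg (by omega : ¬ b ≤ 0),
    if_neg (by omega : ¬ a ≤ 0)]

lemma phi_m1 (a : ℤ) (ha : 2 ≤ a) : Phi ψ a (-1) = m1v ψ a := by
  rw [phi_antisym]
  by_cases h2 : a = 2
  · subst h2
    rw [phi_anchor ψ (-1) (by norm_num)]
    simp [Av, m1v]
  · rw [phi_mixed ψ (-1) a (by norm_num) (by omega), m1v, if_neg h2]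


lemma self_neg_zero {x : K} (h : x = -x) : x = 0 := by
  have h2 : (2:K) * x = 0 := by linear_combination h
  exact (mul_eq_zero.mp h2).resolve_left two_ne_zero

lemma Fq_cell (m : ℕ) (x y : ℤ) (hxy : x ≤ y) (hy : y ≤ 1) (hm : (m:ℤ) = -(x+y)) :
    Fq ψ m x y = Phi ψ x y := by
  by_cases hc : x < y ∧ y ≤ 0
  · rw [phi_quad ψ x y hc.1 hc.2]
    unfold Qv
    congr 1
    omega
  · have hz : Phi ψ x y = 0 := by
      rcases (by omega : y = 1 ∨ x = y) with h | h
      · subst h; exact phi_one_right ψ x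
      · subst h; exact phi_diag ψ x
    rw [hz]
    cases m with
    | zero => simp [Fq]
    | succ m => simp only [Fq]; rw [if_neg hc]

lemma lemQ (i j : ℤ) (h1 : i < j) (h2 : j ≤ 0) :
    ψ i j 1 - wittCoboundary2 (Phi ψ) i j 1 = 0 := by
  have hij : i + j ≤ -1 := by omega
  set n := (-(i+j)).toNat with hn
  obtain ⟨m, hm⟩ : ∃ m, n = m + 1 := ⟨n - 1, by omega⟩
  have hm1 : (m:ℤ) = -(i+j) - 1 := by omega
  have hq : Phi ψ i j = Fq ψ (m+1) i j := by
    rw [phi_quad ψ i j h1 h2]; unfold Qv; rw [← hn, hm]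
  have hstep : Fq ψ (m+1) i j = (ψ i j 1 - ((j - 1 : ℤ) : K) * Fq ψ m i (j+1)
      - ((i - 1 : ℤ) : K) * Fq ψ m (i+1) j) / ((1 - i - j : ℤ) : K) := by
    simp only [Fq]; rw [if_pos ⟨h1, h2⟩]
  have hr1 : Fq ψ m i (j+1) = Phi ψ i (j+1) :=
    Fq_cell ψ m i (j+1) (by omega) (by omega) (by omega)
  have hr2 : Fq ψ m (i+1) j = Phi ψ (i+1) j :=
    Fq_cell ψ m (i+1) j (by omega) (by omega) (by omega)
  have hden : ((1 - i - j : ℤ) : K) ≠ 0 := by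
    rw [Int.cast_ne_zero]; omega
  simp only [wittCoboundary2]
  rw [phi_one_right, phi_one_right, phi_one_right]
  have h13 : Phi ψ (1+j) i = -Phi ψ i (j+1) := by
    rw [phi_antisym ψ (1+j) i, add_comm 1 j]
  rw [h13, hq, hstep, hr1, hr2]
  push_cast at hden ⊢
  field_simp
  ring


lemma cob_swap12 (φ : ℤ → ℤ → K) (h : ∀ a b, φ a b = -φ b a) (i j k : ℤ) :
    wittCoboundary2 φ j i k = -wittCoboundary2 φ i j k := by
  simp only [wittCoboundary2]
  rw [add_comm j i, add_comm k i, add_comm j k, h j i]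
  push_cast
  ring

lemma cob_swap23 (φ : ℤ → ℤ → K) (h : ∀ a b, φ a b = -φ b a) (i j k : ℤ) :
    wittCoboundary2 φ i k j = -wittCoboundary2 φ i j k := by
  simp only [wittCoboundary2]
  rw [add_comm j k, h k j]
  push_cast
  ring

lemma cob_swap13 (φ : ℤ → ℤ → K) (h : ∀ a b, φ a b = -φ b a) (i j k : ℤ) :
    wittCoboundary2 φ k j i = -wittCoboundary2 φ i j k := by
  rw [cob_swap12 φ h j k i, cob_swap23 φ h j i k, cob_swap12 φ h i j k]
  ring

lemma cob_cyc (φ : ℤ → ℤ → K) (h : ∀ a b, φ a b = -φ b a) (i j k : ℤ) :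
    wittCoboundary2 φ k i j = wittCoboundary2 φ i j k := by
  rw [cob_swap12 φ h i k j, cob_swap23 φ h i j k]
  ring

lemma lemM (i j : ℤ) (hi : i ≤ 0) (hj : 2 ≤ j) :
    ψ i j 1 - wittCoboundary2 (Phi ψ) i j 1 = 0 := by
  rcases eq_or_lt_of_le hj with h2 | h3
  · -- j = 2
    subst h2
    simp only [wittCoboundary2]
    rw [phi_one_right, phi_one_right, phi_one_right]
    have h13 : Phi ψ (1+2) i = -Phi ψ i 3 := by rw [phi_antisym ψ (1+2) i]; norm_num
    have hm1 : Phi ψ i 3 = Hm ψ 0 i := by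
      have := phi_mixed ψ i 3 hi (by norm_num)
      simpa using this
    rw [h13, hm1]
    simp only [Hm]
    rw [phi_anchor ψ i hi]
    by_cases hi0 : i = 0
    · subst hi0
      rw [if_pos rfl]
      norm_num [phi_one_left]
      try push_cast
      try ring
    · rw [if_neg hi0, phi_anchor ψ (i+1) (by omega)]
      push_cast
      ring
  · -- 3 ≤ j
    have h3' : (3:ℤ) ≤ j := h3
    simp only [wittCoboundary2]
    rw [phi_one_right, phi_one_right, phi_one_right]
    have h13 : Phi ψ (1+j) i = -Phi ψ i (j+1) := by
      rw [phi_antisym ψ (1+j) i, add_comm 1 j]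
    have hm1 : Phi ψ i (j+1) = Hm ψ (j+1-3).toNat i := phi_mixed ψ i (j+1) hi (by omega)
    have hq : Phi ψ i j = Hm ψ (j-3).toNat i := phi_mixed ψ i j hi (by omega)
    set q := (j-3).toNat with hqdef
    have hq1 : (q:ℤ) = j-3 := by omega
    have hq1K : ((q:ℕ):K) = (j:K) - 3 := by exact_mod_cast congrArg (Int.cast : ℤ → K) hq1
    have hsucc : (j+1-3).toNat = q+1 := by omega
    rw [hsucc] at hm1
    have hstep : Hm ψ (q+1) i = (ψ i (3+(q:ℤ)) 1 - ((1 - i - (3+(q:ℤ)) : ℤ) : K) * Hm ψ q i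
        - ((i - 1 : ℤ) : K) * (if i = 0 then 0 else Hm ψ q (i+1))) / (((q:ℤ)+2 : ℤ) : K) := by
      simp only [Hm]
    rw [show (3+(q:ℤ)) = j from by omega] at hstep
    have hden : (j:K) - 3 + 2 ≠ 0 := by
      have h := Int.cast_ne_zero (α := K).mpr (show (j - 1 : ℤ) ≠ 0 by omega)
      push_cast at h
      intro hc; exact h (by linear_combination hc)
    by_cases hi0 : i = 0
    · subst hi0
      rw [if_pos rfl] at hstep
      rw [h13, hm1, hq, hstep]
      rw [show (0:ℤ)+1 = 1 from by norm_num, phi_one_left]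
      push_cast
      rw [hq1K]
      field_simp
      ring
    · rw [if_neg hi0] at hstep
      have hup : Phi ψ (i+1) j = Hm ψ q (i+1) := by
        rw [phi_mixed ψ (i+1) j (by omega) (by omega), hqdef]
      rw [h13, hm1, hq, hstep, hup]
      push_cast
      rw [hq1K]
      field_simp
      ring

lemma Jf_eq (n : ℕ) : Jf ψ n = Jstep ψ (Jpre ψ n) n := by cases n <;> rfl

lemma Jf_guard_false (n : ℕ) (x : ℤ) (h : ¬(2 ≤ x ∧ 2*x < (n:ℤ)+5)) : Jf ψ n x = 0 := by
  rw [Jf_eq]; unfold Jstep; rw [if_neg h]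

lemma Jf_cell (m : ℕ) (x : ℤ) (hx : 1 ≤ x) (hxx : 2*x ≤ (m:ℤ)+5) :
    Jf ψ m x = Phi ψ x ((m:ℤ)+5-x) := by
  rcases eq_or_lt_of_le hx with h1 | h2
  · rw [← h1, Jf_guard_false ψ m 1 (by omega), phi_one_left]
  · by_cases hd : 2*x = (m:ℤ)+5
    · rw [Jf_guard_false ψ m x (by omega), show (m:ℤ)+5-x = x from by omega, phi_diag]
    · rw [phi_int ψ x ((m:ℤ)+5-x) (by omega) (by omega)]
      congr 1
      omega

lemma Jpre_cell (n : ℕ) (x : ℤ) (hx : 1 ≤ x) (hxx : 2*x ≤ (n:ℤ)+4) :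
    Jpre ψ n x = Phi ψ x ((n:ℤ)+4-x) := by
  cases n with
  | zero =>
    have hx2 : x = 1 ∨ x = 2 := by omega
    show (0:K) = _
    rcases hx2 with h|h <;> subst h
    · rw [show ((0:ℕ):ℤ)+4-1 = 3 from by norm_num, phi_one_left]
    · rw [show ((0:ℕ):ℤ)+4-2 = 2 from by norm_num, phi_diag]
  | succ m =>
    show Jf ψ m x = _
    rw [Jf_cell ψ m x hx (by push_cast at hxx ⊢; omega)]
    congr 1 <;> omega

lemma lemI (i j : ℤ) (hi : 2 ≤ i) (hij : i < j) :
    ψ i j (-1) - wittCoboundary2 (Phi ψ) i j (-1) = 0 := by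
  set n := (i+j-5).toNat with hn
  have hn1 : (n:ℤ) = i+j-5 := by omega
  have hq : Phi ψ i j = Jstep ψ (Jpre ψ n) n i := by
    rw [phi_int ψ i j hi hij, ← hn, Jf_eq]
  unfold Jstep at hq
  rw [if_pos (⟨hi, by omega⟩ : 2 ≤ i ∧ 2*i < (n:ℤ)+5)] at hq
  rw [show (n:ℤ)+5-i = j from by omega] at hq
  rw [show (n:ℤ)+5 = i+j from by omega] at hq
  rw [show (n:ℤ)+6 = i+j+1 from by omega] at hq
  have hr1 : Jpre ψ n i = Phi ψ i (j-1) := by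
    rw [Jpre_cell ψ n i (by omega) (by omega)]
    congr 1
    omega
  have hr2 : Jpre ψ n (i-1) = Phi ψ (i-1) j := by
    rw [Jpre_cell ψ n (i-1) (by omega) (by omega)]
    congr 1
    omega
  rw [hr1, hr2] at hq
  simp only [wittCoboundary2]
  rw [phi_m1 ψ (i+j) (by omega)]
  rw [show (-1+j : ℤ) = j-1 from by omega]
  have h2 : Phi ψ (j-1) i = -Phi ψ i (j-1) := phi_antisym ψ (j-1) i
  rw [h2]
  rw [show (i + -1 : ℤ) = i-1 from by omega]
  rw [phi_m1 ψ j (by omega), phi_m1 ψ i (by omega), hq]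
  have hden : ((i:K)+(j:K)+1) ≠ 0 := by
    have h := Int.cast_ne_zero (α := K).mpr (show (i + j + 1 : ℤ) ≠ 0 by omega)
    push_cast at h
    exact h
  push_cast
  field_simp
  ring

lemma hAvm1 : Av ψ (-1) = 0 := by simp [Av]

lemma hPhi0m1 : Phi ψ 0 (-1) = -Qv ψ (-1) 0 := by
  rw [phi_antisym ψ 0 (-1), phi_quad ψ (-1) 0 (by norm_num) le_rfl]

lemma lemC (hdeg : ψ (-1) (-1) 2 = 0) (i : ℤ) (hi : i ≤ 0) :
    ψ i (-1) 2 - wittCoboundary2 (Phi ψ) i (-1) 2 = 0 := by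
  by_cases h0 : i = 0
  · subst h0
    simp only [wittCoboundary2]
    norm_num
    rw [phi_one_left, hPhi0m1]
    rw [show Phi ψ (-1) 2 = Av ψ (-1) from phi_anchor ψ (-1) (by norm_num), hAvm1]
    rw [show Phi ψ 2 (-1) = m1v ψ 2 from phi_m1 ψ 2 le_rfl]
    rw [show Phi ψ 0 2 = Av ψ 0 from phi_anchor ψ 0 le_rfl]
    rw [show m1v ψ 2 = 0 from by simp [m1v]]
    rw [show Av ψ 0 = (ψ 0 (-1) 2 + 3 * Qv ψ (-1) 0) / 3 from by simp [Av]]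
    field_simp
    try ring
  · by_cases h1 : i = -1
    · subst h1
      simp only [wittCoboundary2]
      norm_num
      rw [phi_diag, hdeg]
      norm_num
    · by_cases hm2 : i = -2
      · subst hm2
        simp only [wittCoboundary2]
        norm_num
        rw [phi_one_left, hPhi0m1]
        rw [show Phi ψ (-1) 2 = Av ψ (-1) from phi_anchor ψ (-1) (by norm_num), hAvm1]
        rw [show Phi ψ (-2) 2 = Av ψ (-2) from phi_anchor ψ (-2) (by norm_num)]
        rw [show Phi ψ (-3) 2 = Av ψ (-3) from phi_anchor ψ (-3) (by norm_num)]
        rw [show Phi ψ (-2) (-1) = Qv ψ (-2) (-1) from phi_quad ψ (-2) (-1) (by norm_num) (by norm_num)]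
        rw [show Av ψ (-2) = am2 ψ from by simp [Av]]
        rw [show Av ψ (-3) = ψ (-2) (-1) 2 - 4 * Qv ψ (-1) 0 - am2 ψ - 5 * Qv ψ (-2) (-1) from by
          simp [Av]]
        ring
      · by_cases hm3 : i = -3
        · subst hm3
          simp only [wittCoboundary2]
          norm_num
          rw [phi_one_left, phi_diag]
          rw [show Phi ψ (-1) 2 = Av ψ (-1) from phi_anchor ψ (-1) (by norm_num), hAvm1]
          rw [show Phi ψ (-4) 2 = Av ψ (-4) from phi_anchor ψ (-4) (by norm_num)]
          rw [show Phi ψ (-3) (-1) = Qv ψ (-3) (-1) from phi_quad ψ (-3) (-1) (by norm_num) (by norm_num)]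
          rw [show Av ψ (-4) = Bc ψ 0 from by norm_num [Av] <;> rfl]
          rw [show Bc ψ 0 = (ψ (-3) (-1) 2 - 6 * Qv ψ (-3) (-1)) / 2 from by simp [Bc]]
          field_simp
          try ring
        · -- i ≤ -4
          have h4 : i ≤ -4 := by omega
          simp only [wittCoboundary2]
          rw [show (2 + -1 : ℤ) = 1 from by norm_num, phi_one_left]
          rw [show (i + -1 : ℤ) = i - 1 from by omega]
          rw [show Phi ψ (-1) 2 = Av ψ (-1) from phi_anchor ψ (-1) (by norm_num), hAvm1]
          rw [phi_anchor ψ (i-1) (by omega), phi_anchor ψ i hi]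
          rw [phi_quad ψ (i+2) (-1) (by omega) (by norm_num)]
          rw [phi_quad ψ i (-1) (by omega) (by norm_num)]
          set k := (-i-4).toNat with hkdef
          have hk : (k:ℤ) = -i-4 := by omega
          have hA : Av ψ i = Bc ψ k := by
            unfold Av
            rw [if_neg h0, if_neg h1, if_neg hm2, if_neg hm3, hkdef]
          have hA1 : Av ψ (i-1) = Bc ψ (k + 1) := by
            unfold Av
            rw [if_neg (by omega), if_neg (by omega), if_neg (by omega), if_neg (by omega)]
            congr 1
            omega
          have hstep : Bc ψ (k+1) = (ψ (-4-(k:ℤ)) (-1) 2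
              - ((-4-(k:ℤ) - 2 : ℤ) : K) * Qv ψ (-4-(k:ℤ)+2) (-1)
              - ((-4-(k:ℤ) + 3 : ℤ) : K) * Bc ψ k
              + ((-4-(k:ℤ) - 3 : ℤ) : K) * Qv ψ (-4-(k:ℤ)) (-1))
              / ((-1 - (-4-(k:ℤ)) : ℤ) : K) := by
            simp only [Bc]
          rw [show (-4-(k:ℤ) : ℤ) = i from by omega] at hstep
          rw [hA, hA1, hstep]
          have hden : ((-1 - i : ℤ) : K) ≠ 0 := by rw [Int.cast_ne_zero]; omega
          push_cast at hden ⊢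
          field_simp
          ring

lemma lemD : ψ (-4) 2 (-2) - wittCoboundary2 (Phi ψ) (-4) 2 (-2) = 0 := by
  simp only [wittCoboundary2]
  norm_num
  rw [phi_diag]
  rw [show Phi ψ 0 (-4) = -Qv ψ (-4) 0 from by
    rw [phi_antisym ψ 0 (-4), phi_quad ψ (-4) 0 (by norm_num) le_rfl]]
  rw [show Phi ψ (-6) 2 = Av ψ (-6) from phi_anchor ψ (-6) (by norm_num)]
  rw [show Phi ψ 2 (-2) = -Av ψ (-2) from by
    rw [phi_antisym ψ 2 (-2), phi_anchor ψ (-2) (by norm_num)]]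
  rw [show Phi ψ (-4) (-2) = Qv ψ (-4) (-2) from phi_quad ψ (-4) (-2) (by norm_num) (by norm_num)]
  rw [show Av ψ (-6) = Bc ψ 2 from by norm_num [Av] <;> rfl]
  rw [show Av ψ (-2) = am2 ψ from by simp [Av]]
  rw [show am2 ψ = (ψ (-4) 2 (-2) - 4 * Qv ψ (-4) 0 + 2 * Bc ψ 2 + 8 * Qv ψ (-4) (-2)) / 4 from rfl]
  field_simp
  ring

end WittHelper

/-- Every degree-zero 3-cocycle of the Witt algebra (adjoint values) is cohomologous
to one whose coefficients satisfy the normalizations of Lemma 4.2.1. -/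
theorem witt_three_cocycle_normalization
    (K : Type*) [Field K] [CharZero K]
    (ψ : ℤ → ℤ → ℤ → K)
    (halt1 : ∀ i j k : ℤ, ψ i j k = -ψ j i k)
    (halt2 : ∀ i j k : ℤ, ψ i j k = -ψ i k j)
    (hcoc : IsWittCocycle3 ψ) :
    ∃ φ : ℤ → ℤ → K, (∀ i j : ℤ, φ i j = -φ j i) ∧
      (∀ i j : ℤ, i ≤ 0 → ψ i j 1 - wittCoboundary2 φ i j 1 = 0) ∧
      (∀ i j : ℤ, 0 < i → 0 < j → ψ i j (-1) - wittCoboundary2 φ i j (-1) = 0) ∧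
      (∀ i : ℤ, ψ i (-1) 2 - wittCoboundary2 φ i (-1) 2 = 0) ∧
      (ψ (-4) 2 (-2) - wittCoboundary2 φ (-4) 2 (-2) = 0) := by
  have hanti := WittHelper.phi_antisym ψ
  have psi13 : ∀ a b c : ℤ, ψ c b a = -ψ a b c := by
    intro a b c; rw [halt1 c b a, halt2 b c a, halt1 b a c]; ring
  have psicyc : ∀ a b c : ℤ, ψ c a b = ψ a b c := by
    intro a b c; rw [halt1 c a b, halt2 a c b]; ring
  have G1 : ∀ i j : ℤ, i ≤ 0 → ψ i j 1 - wittCoboundary2 (WittHelper.Phi ψ) i j 1 = 0 := by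
    intro i j hi
    rcases le_or_gt j 0 with hj | hj
    · rcases lt_trichotomy i j with h|h|h
      · exact WittHelper.lemQ ψ i j h hj
      · subst h
        have z2 : wittCoboundary2 (WittHelper.Phi ψ) i i 1 = 0 :=
          WittHelper.self_neg_zero (WittHelper.cob_swap12 _ hanti i i 1)
        rw [WittHelper.self_neg_zero (halt1 i i 1), z2]; ring
      · have hl := WittHelper.lemQ ψ j i h hi
        rw [halt1 i j 1, WittHelper.cob_swap12 _ hanti j i 1]
        linear_combination -hl
    · by_cases hj1 : j = 1
      · subst hj1
        have z1 : ψ i 1 1 = 0 := WittHelper.self_neg_zero (halt2 i 1 1)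
        have z2 : wittCoboundary2 (WittHelper.Phi ψ) i 1 1 = 0 :=
          WittHelper.self_neg_zero (WittHelper.cob_swap23 _ hanti i 1 1)
        rw [z1, z2]; ring
      · exact WittHelper.lemM ψ i j hi (by omega)
  have G2 : ∀ i j : ℤ, 0 < i → 0 < j →
      ψ i j (-1) - wittCoboundary2 (WittHelper.Phi ψ) i j (-1) = 0 := by
    intro i j hi hj
    rcases lt_trichotomy i j with h|h|h
    · by_cases hi1 : i = 1
      · subst hi1
        rw [show ψ 1 j (-1) = -ψ (-1) j 1 from psi13 (-1) j 1,
          show wittCoboundary2 (WittHelper.Phi ψ) 1 j (-1)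
            = -wittCoboundary2 (WittHelper.Phi ψ) (-1) j 1 from
            WittHelper.cob_swap13 _ hanti (-1) j 1]
        linear_combination -(G1 (-1) j (by norm_num))
      · exact WittHelper.lemI ψ i j (by omega) h
    · subst h
      have z2 := WittHelper.self_neg_zero (WittHelper.cob_swap12 _ hanti i i (-1))
      rw [WittHelper.self_neg_zero (halt1 i i (-1)), z2]; ring
    · by_cases hj1 : j = 1
      · subst hj1
        rw [← psicyc i 1 (-1), ← WittHelper.cob_cyc _ hanti i 1 (-1)]
        exact G1 (-1) i (by norm_num)
      · have hl := WittHelper.lemI ψ j i (by omega) h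
        rw [halt1 i j (-1), WittHelper.cob_swap12 _ hanti j i (-1)]
        linear_combination -hl
  have G3 : ∀ i : ℤ, ψ i (-1) 2 - wittCoboundary2 (WittHelper.Phi ψ) i (-1) 2 = 0 := by
    intro i
    rcases le_or_gt i 0 with hi | hi
    · exact WittHelper.lemC ψ (WittHelper.self_neg_zero (halt1 (-1) (-1) 2)) i hi
    · by_cases h1 : i = 1
      · subst h1
        rw [psicyc (-1) 2 1, WittHelper.cob_cyc _ hanti (-1) 2 1]
        exact G1 (-1) 2 (by norm_num)
      · by_cases h2 : i = 2
        · subst h2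
          have z2 := WittHelper.self_neg_zero (WittHelper.cob_swap13 _ hanti 2 (-1) 2)
          rw [WittHelper.self_neg_zero (psi13 2 (-1) 2), z2]; ring
        · rw [halt2 i (-1) 2, WittHelper.cob_swap23 _ hanti i 2 (-1)]
          linear_combination -(G2 i 2 (by omega) (by norm_num))
  exact ⟨WittHelper.Phi ψ, hanti, G1, G2, G3, WittHelper.lemD ψ⟩
end

section
/- Let ψ be a degree-zero 3-cocycle of the Witt algebra with values in the adjoint module whose coefficients satisfy ψ_{i,j,1} = 0 for all i ≤ 0, j ∈ ℤ; ψ_{i,j,-1} = 0 for all i,j > 0; and ψ_{i,-1,2} = 0 for all i ∈ ℤ. Then ψ_{i,j,0} = 0 for all i, j ∈ ℤ. -/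
/-- Lemma 4.2.2: a suitably normalized degree-zero 3-cocycle of the Witt algebra has
vanishing level-zero coefficients. -/
theorem witt_three_cocycle_level_zero_vanishes
    (K : Type*) [Field K] [CharZero K]
    (ψ : ℤ → ℤ → ℤ → K)
    (halt1 : ∀ i j k : ℤ, ψ i j k = -ψ j i k)
    (halt2 : ∀ i j k : ℤ, ψ i j k = -ψ i k j)
    (hcoc : IsWittCocycle3 ψ)
    (h1 : ∀ i j : ℤ, i ≤ 0 → ψ i j 1 = 0)
    (h2 : ∀ i j : ℤ, 0 < i → 0 < j → ψ i j (-1) = 0)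
    (h3 : ∀ i : ℤ, ψ i (-1) 2 = 0) :
    ∀ i j : ℤ, ψ i j 0 = 0 := by
  -- basic vanishing from alternation
  have zaa : ∀ a c : ℤ, ψ a a c = 0 := by
    intro a c
    have h : (2:K) * ψ a a c = 0 := by linear_combination (halt1 a a c)
    exact (mul_eq_zero.mp h).resolve_left two_ne_zero
  have zbb : ∀ a c : ℤ, ψ a c c = 0 := by
    intro a c
    have h : (2:K) * ψ a c c = 0 := by linear_combination (halt2 a c c)
    exact (mul_eq_zero.mp h).resolve_left two_ne_zero
  have zaca : ∀ a c : ℤ, ψ a c a = 0 := by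
    intro a c
    rw [halt2 a c a, zaa a c, neg_zero]
  have cyc : ∀ a b c : ℤ, ψ a b c = ψ b c a := by
    intro a b c
    rw [halt1 a b c, halt2 b a c, neg_neg]
  -- ψ with a 1 and a nonpositive entry vanishes
  have s1 : ∀ a : ℤ, ψ a (-1) 1 = 0 := by
    intro a
    rcases le_or_gt a 0 with ha | ha
    · exact h1 a (-1) ha
    · rw [halt2 a (-1) 1, h2 a 1 ha one_pos, neg_zero]
  have phi1 : ∀ m : ℤ, ψ m 1 0 = 0 := by
    intro m
    rw [halt2 m 1 0, halt1 m 0 1, h1 0 m le_rfl, neg_zero, neg_zero]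
  -- identity (H): recursion along column -1
  have H : ∀ i : ℤ, ((i - 1 : ℤ) : K) * ψ (i + 1) (-1) 0
      - ((i - 2 : ℤ) : K) * ψ i (-1) 0 = 0 := by
    intro i
    have h := hcoc i (-1) 1 0
    rw [show i + (0:ℤ) = i from by ring] at h
    rw [phi1 (i + -1), s1 i] at h
    rw [show ψ (1 + -1) i 0 = 0 from by norm_num [zaca]] at h
    rw [show ψ (0 + -1) i 1 = 0 from by rw [halt1]; norm_num [s1]] at h
    rw [show ψ (0 + 1) i (-1) = 0 from by rw [cyc]; norm_num [s1]] at h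
    rw [phi1 (-1), phi1 i] at h
    push_cast at h ⊢
    linear_combination h
  -- helper: cancel a nonzero integer-cast factor
  have key : ∀ (c : ℤ) (x : K), (c : K) * x = 0 → c ≠ 0 → x = 0 := by
    intro c x h hc
    exact (mul_eq_zero.mp h).resolve_left (Int.cast_ne_zero.mpr hc)
  -- column -1 vanishes for i ≤ 1
  have colm1_le : ∀ i : ℤ, i ≤ 1 → ψ i (-1) 0 = 0 := by
    have base : ψ (1:ℤ) (-1) 0 = 0 := by rw [halt1, phi1]; ring
    intro i hi
    refine Int.le_induction_down (motive := fun n _ => ψ n (-1) 0 = 0) base ?_ i hi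
    intro n hn ih
    have h := H (n - 1)
    rw [show n - 1 + 1 = n from by ring, ih] at h
    have h2 : ((n - 1 - 2 : ℤ) : K) * ψ (n-1) (-1) 0 = 0 := by linear_combination -h
    exact key _ _ h2 (by omega)
  -- column -1 vanishes for i ≥ 3
  have colm1_ge : ∀ i : ℤ, 3 ≤ i → ψ i (-1) 0 = 0 := by
    have base : ψ (3:ℤ) (-1) 0 = 0 := by
      have h := H 2
      have h2 : ((2 - 1 : ℤ) : K) * ψ 3 (-1) 0 = 0 := by
        rw [show (2:ℤ) + 1 = 3 from by norm_num] at h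
        push_cast at h ⊢
        linear_combination h
      simpa using key _ _ h2 (by norm_num)
    intro i hi
    refine Int.le_induction (motive := fun n _ => ψ n (-1) 0 = 0) base ?_ i hi
    intro n hn ih
    have h := H n
    rw [ih] at h
    have h2 : ((n - 1 : ℤ) : K) * ψ (n+1) (-1) 0 = 0 := by linear_combination h
    exact key _ _ h2 (by omega)
  -- identity (G)
  have G0 : ∀ i : ℤ, ((i + 3 : ℤ) : K) * ψ i 2 0 = ((i + 1 : ℤ) : K) * ψ (i-1) 2 0
      + ((2 - i : ℤ) : K) * ψ (i+2) (-1) 0 + ((i - 3 : ℤ) : K) * ψ i (-1) 0 := by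
    intro i
    have h := hcoc i (-1) 2 0
    rw [show i + (0:ℤ) = i from by ring, show i + (-1:ℤ) = i - 1 from by ring] at h
    rw [h3 i] at h
    rw [show ψ (2 + -1) i 0 = 0 from by rw [halt1]; norm_num [phi1]] at h
    rw [show ψ (0 + -1) i 2 = 0 from by rw [halt1]; norm_num [h3]] at h
    rw [show ψ (0 + 2) i (-1) = 0 from by rw [cyc]; norm_num [h3]] at h
    rw [show ψ (-1) 2 0 = 0 from by rw [cyc (-1) 2 0, cyc 2 0 (-1)]; exact h3 0] at h
    push_cast at h ⊢
    linear_combination h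
  have phi02 : ψ (0:ℤ) 2 0 = 0 := zaca 0 2
  have row2_1 : ψ (1:ℤ) 2 0 = 0 := by
    have h := G0 1
    rw [show (1:ℤ)-1 = 0 from by norm_num, show (1:ℤ)+2 = 3 from by norm_num,
      phi02, colm1_ge 3 (by norm_num), colm1_le 1 (by norm_num)] at h
    have h2 : ((4:ℤ):K) * ψ (1:ℤ) 2 0 = 0 := by push_cast at h ⊢; linear_combination h
    exact key _ _ h2 (by norm_num)
  have col2m1 : ψ (2:ℤ) (-1) 0 = 0 := by
    have h := G0 2
    rw [show (2:ℤ)-1 = 1 from by norm_num, zaa 2 0, row2_1] at h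
    have h2 : ((1:ℤ):K) * ψ (2:ℤ) (-1) 0 = 0 := by push_cast at h ⊢; linear_combination h
    exact key _ _ h2 (by norm_num)
  have colm1 : ∀ i : ℤ, ψ i (-1) 0 = 0 := by
    intro i
    by_cases hi : i ≤ 1
    · exact colm1_le i hi
    · by_cases hi2 : i = 2
      · rw [hi2]; exact col2m1
      · exact colm1_ge i (by omega)
  have G : ∀ i : ℤ, ((i + 3 : ℤ) : K) * ψ i 2 0 = ((i + 1 : ℤ) : K) * ψ (i-1) 2 0 := by
    intro i
    have h := G0 i
    rw [colm1 (i+2), colm1 i] at h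
    push_cast at h ⊢
    linear_combination h
  have row2up : ∀ i : ℤ, 0 ≤ i → ψ i 2 0 = 0 := by
    intro i hi
    refine Int.le_induction (motive := fun n _ => ψ n 2 0 = 0) phi02 ?_ i hi
    intro n hn ih
    have h := G (n+1)
    rw [show n + 1 - 1 = n from by ring, ih] at h
    have h2 : ((n + 1 + 3 : ℤ) : K) * ψ (n+1) 2 0 = 0 := by linear_combination h
    exact key _ _ h2 (by omega)
  have r2m4 : ψ (-4:ℤ) 2 0 = 0 := by
    have h := G (-3)
    rw [show (-3:ℤ)-1 = -4 from by norm_num] at h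
    have h2 : ((-2:ℤ):K) * ψ (-4:ℤ) 2 0 = 0 := by push_cast at h ⊢; linear_combination -h
    exact key _ _ h2 (by norm_num)
  have r2m5 : ψ (-5:ℤ) 2 0 = 0 := by
    have h := G (-4)
    rw [show (-4:ℤ)-1 = -5 from by norm_num, r2m4] at h
    have h2 : ((-3:ℤ):K) * ψ (-5:ℤ) 2 0 = 0 := by push_cast at h ⊢; linear_combination -h
    exact key _ _ h2 (by norm_num)
  have e1 : ψ (-3:ℤ) (-2) 0 = 0 := by
    have h := hcoc (-3) (-2) 0 1
    rw [show ψ (-3 + -2 : ℤ) 0 1 = 0 from by rw [halt2]; norm_num [phi1],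
      show ψ (-3 + 0 : ℤ) (-2) 1 = 0 from by norm_num; exact h1 _ _ (by norm_num),
      show ψ (-3 + 1 : ℤ) (-2) 0 = 0 from by norm_num [zaa],
      show ψ (0 + -2 : ℤ) (-3) 1 = 0 from by norm_num; exact h1 _ _ (by norm_num),
      show ψ (1 + -2 : ℤ) (-3) 0 = 0 from by rw [halt1]; norm_num [colm1],
      show ψ (1 + 0 : ℤ) (-3) (-2) = 0 from by
        rw [cyc]; norm_num; exact h1 _ _ (by norm_num),
      show ψ (-2:ℤ) 0 1 = 0 from h1 _ _ (by norm_num),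
      show ψ (-3:ℤ) 0 1 = 0 from h1 _ _ (by norm_num),
      show ψ (-3:ℤ) (-2) 1 = 0 from h1 _ _ (by norm_num)] at h
    have h2 : ((-6:ℤ):K) * ψ (-3:ℤ) (-2) 0 = 0 := by push_cast at h ⊢; linear_combination h
    exact key _ _ h2 (by norm_num)
  have e3 : ψ (-3:ℤ) 0 2 + ψ (-2:ℤ) 0 2 = 0 := by
    have h := hcoc (-2) (-1) 0 2
    rw [show (-2:ℤ) + -1 = -3 from by norm_num, show (-2:ℤ) + 0 = -2 from by norm_num,
      show (-2:ℤ) + 2 = 0 from by norm_num, show (0:ℤ) + -1 = -1 from by norm_num,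
      show (2:ℤ) + -1 = 1 from by norm_num, show (2:ℤ) + 0 = 2 from by norm_num] at h
    rw [h3 (-2), zaca 0 (-1),
      show ψ (-1:ℤ) (-2) 2 = 0 from by rw [halt1]; norm_num [h3],
      show ψ (1:ℤ) (-2) 0 = 0 from by rw [cyc]; exact h1 _ _ (by norm_num),
      show ψ (2:ℤ) (-2) (-1) = 0 from by rw [cyc]; exact h3 _,
      show ψ (-1:ℤ) 0 2 = 0 from by rw [halt1]; norm_num [h3],
      colm1 (-2)] at h
    push_cast at h ⊢
    linear_combination h
  have e2 : ψ (-3:ℤ) 0 2 = ((3:ℤ):K) * ψ (-2:ℤ) 0 2 := by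
    have h := hcoc (-3) (-2) 0 2
    rw [show (-3:ℤ) + -2 = -5 from by norm_num, show (-3:ℤ) + 0 = -3 from by norm_num,
      show (-3:ℤ) + 2 = -1 from by norm_num, show (0:ℤ) + -2 = -2 from by norm_num,
      show (2:ℤ) + -2 = 0 from by norm_num, show (2:ℤ) + 0 = 2 from by norm_num] at h
    rw [show ψ (-5:ℤ) 0 2 = 0 from by rw [halt2]; norm_num [r2m5],
      show ψ (-1:ℤ) (-2) 0 = 0 from by rw [halt1]; norm_num [colm1],
      halt1 (-2) (-3) 2, zaca 0 (-3), cyc 2 (-3) (-2), e1] at h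
    push_cast at h ⊢
    linear_combination h
  have r2m2 : ψ (-2:ℤ) 2 0 = 0 := by
    have h2 : ((4:ℤ):K) * ψ (-2:ℤ) 0 2 = 0 := by push_cast; linear_combination e3 - e2
    have h4 := key _ _ h2 (by norm_num)
    rw [halt2, h4, neg_zero]
  have r2m3 : ψ (-3:ℤ) 2 0 = 0 := by
    have h := G (-2)
    rw [show (-2:ℤ)-1 = -3 from by norm_num, r2m2] at h
    have h2 : ((-1:ℤ):K) * ψ (-3:ℤ) 2 0 = 0 := by push_cast at h ⊢; linear_combination -h
    exact key _ _ h2 (by norm_num)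
  have row2 : ∀ i : ℤ, ψ i 2 0 = 0 := by
    have down : ∀ i : ℤ, i ≤ -4 → ψ i 2 0 = 0 := by
      intro i hi
      refine Int.le_induction_down (motive := fun n _ => ψ n 2 0 = 0) r2m4 ?_ i hi
      intro n hn ih
      have h := G n
      rw [ih] at h
      have h2 : ((n + 1 : ℤ) : K) * ψ (n-1) 2 0 = 0 := by linear_combination -h
      exact key _ _ h2 (by omega)
    intro i
    rcases le_or_gt i (-4) with hi | hi
    · exact down i hi
    · rcases lt_or_ge i 0 with hi2 | hi2
      · interval_cases i
        · exact r2m3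
        · exact r2m2
        · have h := G (-1)
          rw [show (-1:ℤ)-1 = -2 from by norm_num, r2m2] at h
          have h2 : ((2:ℤ):K) * ψ (-1:ℤ) 2 0 = 0 := by push_cast at h ⊢; linear_combination h
          exact key _ _ h2 (by norm_num)
      · exact row2up i hi2
  -- identity (E): 2-cocycle relation with k = 1
  have E : ∀ i j : ℤ, ((1 - i : ℤ) : K) * ψ (i+1) j 0 + ((1 - j : ℤ) : K) * ψ i (j+1) 0
      + ((i + j - 1 : ℤ) : K) * ψ i j 0 = 0 := by
    intro i j
    have h := hcoc i j 1 0
    rw [halt1 (1+j) i 0, halt1 (0+j) i 1, cyc (0+1) i j] at h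
    rw [show i + (0:ℤ) = i from by ring, show (1:ℤ) + j = j + 1 from by ring,
      show (0:ℤ) + j = j from by ring, show (0:ℤ) + 1 = 1 from by norm_num] at h
    rw [phi1 (i+j), phi1 j, phi1 i] at h
    push_cast at h ⊢
    linear_combination -h
  -- all rows j ≥ 2 vanish
  have rowge2 : ∀ j : ℤ, 2 ≤ j → ∀ i : ℤ, ψ i j 0 = 0 := by
    intro j hj
    refine Int.le_induction (motive := fun n _ => ∀ i : ℤ, ψ i n 0 = 0) row2 ?_ j hj
    intro n hn ih i
    have h := E i n
    rw [ih (i+1), ih i] at h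
    have h2 : ((1 - n : ℤ) : K) * ψ i (n+1) 0 = 0 := by linear_combination h
    exact key _ _ h2 (by omega)
  -- all rows j ≥ 0 vanish
  have rowNN : ∀ j : ℤ, 0 ≤ j → ∀ i : ℤ, ψ i j 0 = 0 := by
    intro j hj i
    by_cases h0 : j = 0
    · rw [h0]; exact zbb i 0
    · by_cases h1' : j = 1
      · rw [h1']; exact phi1 i
      · exact rowge2 j (by omega) i
  -- downward induction over negative rows
  have S : ∀ n : ℕ, ∀ i j : ℤ, -(n:ℤ) ≤ j → ψ i j 0 = 0 := by
    intro n
    induction n with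
    | zero => intro i j hj; exact rowNN j (by exact_mod_cast hj) i
    | succ n ih =>
      intro i j hj
      rcases le_or_gt (-(n:ℤ)) j with hcase | hcase
      · exact ih i j hcase
      · have hj2 : j = -(n:ℤ) - 1 := by push_cast at hj; omega
        subst hj2
        have inner : ∀ m : ℕ, ψ (-(n:ℤ) - 1 - (m:ℤ)) (-(n:ℤ) - 1) 0 = 0 := by
          intro m
          induction m with
          | zero =>
            rw [show -(n:ℤ) - 1 - ((0:ℕ):ℤ) = -(n:ℤ) - 1 from by push_cast; ring]
            exact zaa _ _
          | succ m ihm =>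
            rw [show -(n:ℤ) - 1 - ((m+1:ℕ):ℤ) = -(n:ℤ) - 1 - (m:ℤ) - 1 from by push_cast; ring]
            have h := E (-(n:ℤ) - 1 - (m:ℤ) - 1) (-(n:ℤ) - 1)
            rw [show -(n:ℤ) - 1 - (m:ℤ) - 1 + 1 = -(n:ℤ) - 1 - (m:ℤ) from by ring, ihm] at h
            rw [show -(n:ℤ) - 1 + 1 = -(n:ℤ) from by ring] at h
            rw [ih (-(n:ℤ) - 1 - (m:ℤ) - 1) (-(n:ℤ)) le_rfl] at h
            have h2 : ((-(n:ℤ) - 1 - (m:ℤ) - 1 + (-(n:ℤ) - 1) - 1 : ℤ) : K)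
                * ψ (-(n:ℤ) - 1 - (m:ℤ) - 1) (-(n:ℤ) - 1) 0 = 0 := by linear_combination h
            exact key _ _ h2 (by omega)
        rcases le_or_gt (-(n:ℤ)) i with hi | hi
        · rw [halt1, ih (-(n:ℤ) - 1) i hi, neg_zero]
        · rw [show i = -(n:ℤ) - 1 - ((-(n:ℤ) - 1 - i).toNat : ℤ) from by omega]
          exact inner _
  intro i j
  rcases le_or_gt 0 j with hj | hj
  · exact rowNN j hj i
  · exact S (-j).toNat i j (by omega)
end

section
/- Let ψ be a degree-zero 3-cocycle of the Witt algebra with values in the adjoint module such that ψ_{i,j,1} = 0 for all i ≤ 0, j ∈ ℤ; ψ_{i,j,-1} = 0 for all i,j > 0; ψ_{i,-1,2} = 0 for all i ∈ ℤ; and ψ_{i,j,0} = 0 for all i,j ∈ ℤ. Then ψ_{i,j,1} = ψ_{i,j,-1} = 0 for all i, j ∈ ℤ. -/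
private lemma cancel_aux {K : Type*} [Field K] {c x : K} (hc : c ≠ 0) (h : c * x = 0) :
    x = 0 := by
  rcases mul_eq_zero.mp h with h' | h'
  · exact absurd h' hc
  · exact h'

/-- Lemma 4.2.3: the levels plus one and minus one of a normalized degree-zero
3-cocycle of the Witt algebra vanish entirely. -/
theorem witt_three_cocycle_level_pm_one_vanishes
    (K : Type*) [Field K] [CharZero K]
    (ψ : ℤ → ℤ → ℤ → K)
    (halt1 : ∀ i j k : ℤ, ψ i j k = -ψ j i k)
    (halt2 : ∀ i j k : ℤ, ψ i j k = -ψ i k j)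
    (hcoc : IsWittCocycle3 ψ)
    (h1 : ∀ i j : ℤ, i ≤ 0 → ψ i j 1 = 0)
    (h2 : ∀ i j : ℤ, 0 < i → 0 < j → ψ i j (-1) = 0)
    (h3 : ∀ i : ℤ, ψ i (-1) 2 = 0)
    (h0 : ∀ i j : ℤ, ψ i j 0 = 0) :
    ∀ i j : ℤ, ψ i j 1 = 0 ∧ ψ i j (-1) = 0 := by
  -- swap of outer slots
  have hswap13 : ∀ i j k : ℤ, ψ i j k = -ψ k j i := by
    intro i j k
    rw [halt1 i j k, halt2 j i k, halt1 j k i]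
    ring
  -- zero in middle slot
  have hz_mid : ∀ i j : ℤ, ψ i 0 j = 0 := by
    intro i j
    rw [halt2 i 0 j, h0, neg_zero]
  -- zero in first slot
  have hz_fst : ∀ i j : ℤ, ψ 0 i j = 0 := by
    intro i j
    rw [hswap13 0 i j, h0, neg_zero]
  -- level one vanishes entirely
  have F : ∀ i j : ℤ, ψ i j 1 = 0 := by
    have Fpos : ∀ n : ℕ, ∀ i j : ℤ, 0 < i → 0 < j → i + j ≤ n → ψ i j 1 = 0 := by
      intro n
      induction n with
      | zero => intro i j hi hj hle; omega
      | succ n ih =>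
        intro i j hi hj hle
        have hA : ψ (i + -1) j 1 = 0 := by
          rcases lt_or_ge 1 i with h' | h'
          · exact ih (i + -1) j (by omega) hj (by omega)
          · exact h1 _ _ (by omega)
        have hB : ψ (-1 + j) i 1 = 0 := by
          rcases lt_or_ge 1 j with h' | h'
          · rw [halt1, ih i (-1 + j) hi (by omega) (by omega)]
            ring
          · exact h1 (-1 + j) i (by omega)
        have h := hcoc i j 1 (-1)
        rw [h2 (i + j) 1 (by omega) (by omega), h2 (i + 1) j (by omega) hj,
          h2 (1 + j) i (by omega) hi, h2 j 1 hj (by omega), h2 i 1 hi (by omega),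
          h2 i j hi hj, hA, hB, show (-1 : ℤ) + 1 = 0 by omega, hz_fst] at h
        have hc : ((i + j + 1 - -1 : ℤ) : K) ≠ 0 := by
          rw [Int.cast_ne_zero]; omega
        refine cancel_aux hc ?_
        push_cast at h ⊢
        linear_combination h
    intro i j
    rcases le_or_gt i 0 with hi | hi
    · exact h1 i j hi
    rcases le_or_gt j 0 with hj | hj
    · rw [halt1, h1 j i hj]; ring
    · exact Fpos (i + j).toNat i j hi hj (by omega)
  -- level minus one with a 1 anywhere vanishes
  have Glem1 : ∀ x : ℤ, ψ x 1 (-1) = 0 := by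
    intro x
    rw [halt2 x 1 (-1), halt1 x (-1) 1, h1 (-1) x (by omega)]
    ring
  -- the main recurrence on level -1
  have Erec : ∀ i j : ℤ,
      ((i - 1 : ℤ) : K) * ψ (i + 1) j (-1) + ((j - 1 : ℤ) : K) * ψ i (j + 1) (-1)
        - ((i + j - 2 : ℤ) : K) * ψ i j (-1) = 0 := by
    intro i j
    have h := hcoc i j 1 (-1)
    rw [Glem1 (i + j), Glem1 j, Glem1 i, F (i + -1) j, F (-1 + j) i, F i j,
      show (-1 : ℤ) + 1 = 0 by omega, hz_fst, halt1 (1 + j) i (-1),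
      show (1 : ℤ) + j = j + 1 by omega] at h
    push_cast at h ⊢
    linear_combination h
  -- ψ (-1) j (-1) = 0
  have Gm1 : ∀ j : ℤ, ψ (-1) j (-1) = 0 := by
    intro j
    have h := hswap13 (-1) j (-1)
    linear_combination h / 2
  -- level -1 vanishes for second index ≥ 2
  have Gup : ∀ n : ℕ, ∀ i : ℤ, ψ i (2 + n) (-1) = 0 := by
    intro n
    induction n with
    | zero =>
      intro i
      rw [show (2 : ℤ) + (0 : ℕ) = 2 by norm_num, halt2 i 2 (-1), h3, neg_zero]
    | succ n ih =>
      intro i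
      have h := Erec i (2 + n)
      rw [ih (i + 1), ih i, show (2 : ℤ) + (n : ℤ) + 1 = 2 + ((n : ℕ) + 1 : ℕ) by push_cast; ring] at h
      have hc : ((2 + (n : ℤ) - 1 : ℤ) : K) ≠ 0 := by
        rw [Int.cast_ne_zero]; omega
      refine cancel_aux hc ?_
      push_cast at h ⊢
      linear_combination h
  -- level -1 vanishes when the second index is ≥ 0
  have Gge0 : ∀ i j : ℤ, 0 ≤ j → ψ i j (-1) = 0 := by
    intro i j hj
    rcases eq_or_lt_of_le hj with h' | h'
    · rw [← h']; exact hz_mid i (-1)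
    rcases eq_or_lt_of_le (show (1 : ℤ) ≤ j by omega) with h'' | h''
    · rw [← h'']; exact Glem1 i
    · obtain ⟨n, rfl⟩ : ∃ n : ℕ, j = 2 + n := ⟨(j - 2).toNat, by omega⟩
      exact Gup n i
  -- level -1 vanishes when the first index is ≥ 0
  have Gfst0 : ∀ i j : ℤ, 0 ≤ i → ψ i j (-1) = 0 := by
    intro i j hi
    rw [halt1, Gge0 j i hi, neg_zero]
  -- level -1 vanishes for first index ≤ -2, by downward double induction
  have Gneg : ∀ a : ℕ, ∀ j : ℤ, ψ (-2 - a) j (-1) = 0 := by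
    intro a
    induction a with
    | zero =>
      have prev : ∀ j : ℤ, ψ (-2 - (0 : ℕ) + 1) j (-1) = 0 := by
        intro j
        rw [show (-2 : ℤ) - (0 : ℕ) + 1 = -1 by norm_num]
        exact Gm1 j
      have inner : ∀ b : ℕ, ψ (-2 - (0 : ℕ)) (-(b : ℤ)) (-1) = 0 := by
        intro b
        induction b with
        | zero => exact Gge0 _ _ (by norm_num)
        | succ b ihb =>
          have h := Erec (-2 - (0 : ℕ)) (-(b : ℤ) - 1)
          rw [prev, show -(b : ℤ) - 1 + 1 = -(b : ℤ) by ring, ihb] at h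
          have hc : (((-2 - (0 : ℕ) + (-(b : ℤ) - 1) - 2 : ℤ)) : K) ≠ 0 := by
            rw [Int.cast_ne_zero]; push_cast; omega
          rw [show (-(((b : ℕ) + 1 : ℕ) : ℤ)) = -(b : ℤ) - 1 by push_cast; ring]
          exact cancel_aux hc (by push_cast at h ⊢; linear_combination -h)
      intro j
      rcases le_or_gt 0 j with hj | hj
      · exact Gge0 _ j hj
      · obtain ⟨b, rfl⟩ : ∃ b : ℕ, j = -(b : ℤ) := ⟨(-j).toNat, by omega⟩
        exact inner b
    | succ a ih =>
      have prev : ∀ j : ℤ, ψ (-2 - ((a : ℕ) + 1 : ℕ) + 1) j (-1) = 0 := by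
        intro j
        rw [show (-2 : ℤ) - ((a : ℕ) + 1 : ℕ) + 1 = -2 - a by push_cast; ring]
        exact ih j
      have inner : ∀ b : ℕ, ψ (-2 - ((a : ℕ) + 1 : ℕ)) (-(b : ℤ)) (-1) = 0 := by
        intro b
        induction b with
        | zero => exact Gge0 _ _ (by norm_num)
        | succ b ihb =>
          have h := Erec (-2 - ((a : ℕ) + 1 : ℕ)) (-(b : ℤ) - 1)
          rw [prev, show -(b : ℤ) - 1 + 1 = -(b : ℤ) by ring, ihb] at h
          have hc : (((-2 - ((a : ℕ) + 1 : ℕ) + (-(b : ℤ) - 1) - 2 : ℤ)) : K) ≠ 0 := by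
            rw [Int.cast_ne_zero]; push_cast; omega
          rw [show (-(((b : ℕ) + 1 : ℕ) : ℤ)) = -(b : ℤ) - 1 by push_cast; ring]
          exact cancel_aux hc (by push_cast at h ⊢; linear_combination -h)
      intro j
      rcases le_or_gt 0 j with hj | hj
      · exact Gge0 _ j hj
      · obtain ⟨b, rfl⟩ : ∃ b : ℕ, j = -(b : ℤ) := ⟨(-j).toNat, by omega⟩
        exact inner b
  intro i j
  refine ⟨F i j, ?_⟩
  rcases le_or_gt 0 i with hi | hi
  · exact Gfst0 i j hi
  rcases eq_or_lt_of_le (show i ≤ -1 by omega) with h' | h'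
  · rw [h']; exact Gm1 j
  · obtain ⟨a, rfl⟩ : ∃ a : ℕ, i = -2 - a := ⟨(-2 - i).toNat, by omega⟩
    exact Gneg a j
end

section
/- The algebraic Godbillon-Vey 3-cochain on the Witt algebra, defined by GV(e_n, e_m, e_k) = 0 if n + m + k ≠ 0 and GV(e_n, e_m, e_{-(n+m)}) = (m - n)(2m + n)(m + 2n), is a 3-cocycle with values in the trivial module K. -/
/-- The algebraic Godbillon-Vey 3-cochain on the Witt algebra, in coefficient form:
`GV(e_n, e_m, e_k) = (m-n)(2m+n)(m+2n)` if `n+m+k = 0` and `0` otherwise. -/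
def godbillonVey (K : Type*) [Field K] (n m k : ℤ) : K :=
  if n + m + k = 0 then (((m - n) * (2 * m + n) * (m + 2 * n) : ℤ) : K) else 0

/-- The Godbillon-Vey 3-cochain is an alternating 3-cocycle of the Witt algebra with
values in the trivial module `K`. -/
theorem godbillonVey_is_cocycle (K : Type*) [Field K] [CharZero K] :
    (∀ n m k : ℤ, godbillonVey K n m k = -godbillonVey K m n k) ∧
    (∀ n m k : ℤ, godbillonVey K n m k = -godbillonVey K n k m) ∧
    (∀ i j k l : ℤ,
      ((j - i : ℤ) : K) * godbillonVey K (i + j) k l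
        - ((k - i : ℤ) : K) * godbillonVey K (i + k) j l
        + ((l - i : ℤ) : K) * godbillonVey K (i + l) j k
        + ((k - j : ℤ) : K) * godbillonVey K (k + j) i l
        - ((l - j : ℤ) : K) * godbillonVey K (l + j) i k
        + ((l - k : ℤ) : K) * godbillonVey K (l + k) i j = 0) := by
  refine ⟨fun n m k => ?_, fun n m k => ?_, fun i j k l => ?_⟩
  · unfold godbillonVey
    by_cases h : n + m + k = 0
    · obtain rfl : k = -(n + m) := by omega
      rw [if_pos (by ring), if_pos (by ring)]
      push_cast; ring
    · rw [if_neg h, if_neg (by omega)]; ring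
  · unfold godbillonVey
    by_cases h : n + m + k = 0
    · obtain rfl : k = -(n + m) := by omega
      rw [if_pos (by ring), if_pos (by ring)]
      push_cast; ring
    · rw [if_neg h, if_neg (by omega)]; ring
  · unfold godbillonVey
    by_cases h : i + j + k + l = 0
    · obtain rfl : l = -(i + j + k) := by omega
      rw [if_pos (by ring), if_pos (by ring), if_pos (by ring), if_pos (by ring),
        if_pos (by ring), if_pos (by ring)]
      push_cast; ring
    · rw [if_neg (by omega), if_neg (by omega), if_neg (by omega), if_neg (by omega),
        if_neg (by omega), if_neg (by omega)]
      ring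
end

section
/- The Godbillon-Vey 3-cocycle GV is not a coboundary: GV(e_1, e_0, e_{-1}) ≠ 0, while (δ_2 φ)(e_1, e_0, e_{-1}) = 0 for every 2-cochain φ: Λ^2 W → K. Hence H^3(W, K) ≠ 0. -/
/-- The Godbillon-Vey 3-cocycle is not a coboundary: it is nonzero on `(e₁, e₀, e₋₁)`
while every coboundary `δ₂φ` of a 2-cochain `φ` vanishes there; hence `H³(W,K) ≠ 0`. -/
theorem godbillonVey_not_coboundary (K : Type*) [Field K] [CharZero K] :
    godbillonVey K 1 0 (-1) ≠ 0 ∧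
    ∀ φ : ℤ → ℤ → K, (∀ i j : ℤ, φ i j = -φ j i) →
      -- `(δ₂φ)(e₁,e₀,e₋₁) = φ([e₁,e₀],e₋₁) + φ([e₀,e₋₁],e₁) + φ([e₋₁,e₁],e₀)`
      ((0 - 1 : ℤ) : K) * φ 1 (-1) + ((-1 - 0 : ℤ) : K) * φ (-1) 1
        + ((1 - (-1) : ℤ) : K) * φ 0 0 = 0 := by
  constructor
  · simp [godbillonVey]
  · intro φ hφ
    have h1 : φ (-1) 1 = -φ 1 (-1) := hφ (-1) 1
    have h0 : φ 0 0 = 0 := by have h := hφ 0 0; linear_combination h / 2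
    rw [h1, h0]
    push_cast
    ring
end

section
/- The bracket [ê_n, ê_m] = (m-n)ê_{n+m} - (1/12)(n³-n)δ_n^{-m} t, with t central, defines a Lie algebra structure on K ⊕ W (the Virasoro algebra); equivalently, α(e_n, e_m) = -(1/12)(n³-n)δ_n^{-m} is a 2-cocycle on the Witt algebra with values in the trivial module. -/
/-- The Virasoro cocycle `α(e_n, e_m) = -(1/12)(n³ - n) δ_n^{-m}` in coefficient form. -/
def virasoroAlpha (K : Type*) [Field K] (n m : ℤ) : K :=
  if m = -n then -(1 / 12 : K) * ((n : K) ^ 3 - (n : K)) else 0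

/-- `α` is an alternating 2-cocycle of the Witt algebra with values in the trivial
module; equivalently, the Virasoro bracket on `K ⊕ W` satisfies the Jacobi identity
and defines a Lie algebra (the Virasoro algebra). -/
theorem virasoroAlpha_is_two_cocycle (K : Type*) [Field K] [CharZero K] :
    (∀ n m : ℤ, virasoroAlpha K n m = -virasoroAlpha K m n) ∧
    (∀ i j k : ℤ,
      ((j - i : ℤ) : K) * virasoroAlpha K (i + j) k
        + ((k - j : ℤ) : K) * virasoroAlpha K (j + k) i
        + ((i - k : ℤ) : K) * virasoroAlpha K (k + i) j = 0) := by
  constructor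
  · intro n m
    unfold virasoroAlpha
    by_cases h : m = -n
    · have h' : n = -m := by omega
      rw [if_pos h, if_pos h']
      subst h
      push_cast
      ring
    · have h' : ¬ n = -m := by omega
      rw [if_neg h, if_neg h', neg_zero]
  · intro i j k
    unfold virasoroAlpha
    by_cases h : k = -(i + j)
    · have h1 : i = -(j + k) := by omega
      have h2 : j = -(k + i) := by omega
      simp only [if_pos h, if_pos h1, if_pos h2]
      subst h
      push_cast
      ring
    · have h1 : ¬ i = -(j + k) := by omega
      have h2 : ¬ j = -(k + i) := by omega
      rw [if_neg h, if_neg h1, if_neg h2]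
      ring
end

section
/- The first cohomology of the Virasoro algebra with values in the adjoint module vanishes: H^1(V, V) = 0; equivalently, every derivation of the Virasoro algebra is inner. -/
set_option linter.unusedSectionVars false

namespace VirasoroH1

variable {K : Type*} [Field K] [CharZero K]
variable {V : Type*} [LieRing V] [LieAlgebra K V]

section
variable (b : Module.Basis (Option ℤ) K V)
  (hbr : ∀ n m : ℤ, ⁅b (some n), b (some m)⁆
      = ((m - n : ℤ) : K) • b (some (n + m))
        - (if m = -n then (1 / 12 : K) * ((n : K) ^ 3 - (n : K)) else 0) • b none)
  (hcent : ∀ n : ℤ, ⁅b (some n), b none⁆ = 0)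

variable (D : V →ₗ[K] V) in
noncomputable def v1 : V :=
  b.repr.symm <| Finsupp.onFinset (b.repr (D (b (some 0)))).support
    (fun i => Option.casesOn i 0 fun s =>
      if s = 0 then 0 else -(b.repr (D (b (some 0))) (some s)) / (s : K))
    (by
      intro i hi
      cases i with
      | none => simp at hi
      | some s =>
        simp only [Option.casesOn] at hi
        rw [Finsupp.mem_support_iff]
        split at hi
        · exact absurd rfl hi
        · intro h; simp [h] at hi)

variable (D : V →ₗ[K] V) in
noncomputable def d1 (n : ℤ) : V := D (b (some n)) - ⁅v1 b D, b (some n)⁆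

variable (D : V →ₗ[K] V) in
noncomputable def Ac (n : ℤ) : K := b.repr (d1 b D n) (some n)

variable (D : V →ₗ[K] V) in
noncomputable def Bc (n : ℤ) : K := b.repr (d1 b D n) none

lemma repr_v1_some (D : V →ₗ[K] V) {s : ℤ} (hs : s ≠ 0) :
    b.repr (v1 b D) (some s) = -(b.repr (D (b (some 0))) (some s)) / (s : K) := by
  simp [v1, hs]

lemma repr_v1_zero (D : V →ₗ[K] V) : b.repr (v1 b D) (some 0) = 0 := by simp [v1]

lemma repr_v1_none (D : V →ₗ[K] V) : b.repr (v1 b D) none = 0 := by simp [v1]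

include hcent in
lemma lie_t (x : V) : ⁅x, b none⁆ = 0 := by
  have h : (-(LieAlgebra.ad K V (b none)) : V →ₗ[K] V) = 0 := by
    apply b.ext
    intro i
    cases i with
    | none => simp
    | some n =>
      have : ⁅b none, b (some n)⁆ = 0 := by rw [← lie_skew, hcent n, neg_zero]
      simp [LieAlgebra.ad_apply, this]
  have := LinearMap.congr_fun h x
  simp only [LinearMap.neg_apply, LieAlgebra.ad_apply, LinearMap.zero_apply, neg_eq_zero] at this
  rw [← lie_skew, this, neg_zero]

include hbr hcent in
lemma repr_lie (m k : ℤ) (x : V) :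
    b.repr ⁅x, b (some m)⁆ (some k) = ((2 * m - k : ℤ) : K) * b.repr x (some (k - m)) := by
  have h : (b.coord (some k)) ∘ₗ (-(LieAlgebra.ad K V (b (some m))) : V →ₗ[K] V)
      = ((2 * m - k : ℤ) : K) • (b.coord (some (k - m))) := by
    apply b.ext
    intro i
    cases i with
    | none =>
      simp only [LinearMap.comp_apply, LinearMap.neg_apply, LieAlgebra.ad_apply,
        Module.Basis.coord_apply, LinearMap.smul_apply, smul_eq_mul]
      simp [hcent m, Module.Basis.repr_self, Finsupp.single_apply]
    | some j =>
      have h1 : ⁅b (some j), b (some m)⁆ = ((m - j : ℤ) : K) • b (some (j + m))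
          - (if m = -j then (1 / 12 : K) * ((j : K) ^ 3 - (j : K)) else 0) • b none := hbr j m
      simp only [LinearMap.comp_apply, LinearMap.neg_apply, LieAlgebra.ad_apply,
        Module.Basis.coord_apply, LinearMap.smul_apply, smul_eq_mul]
      rw [show -⁅b (some m), b (some j)⁆ = ⁅b (some j), b (some m)⁆ from lie_skew _ _, h1]
      simp only [map_sub, map_smul, Module.Basis.repr_self, Finsupp.sub_apply, Finsupp.smul_apply,
        Finsupp.single_apply, smul_eq_mul]
      by_cases hj : j = k - m
      · subst hj
        simp only [sub_add_cancel, if_pos rfl, reduceCtorEq, if_neg (by simp : ¬ (none : Option ℤ) = some (k-m))]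
        push_cast
        ring
      · simp [Finsupp.single_apply, hj, show ¬ j + m = k by omega]
  have h2 := LinearMap.congr_fun h x
  rw [LinearMap.comp_apply, LinearMap.neg_apply, LieAlgebra.ad_apply, lie_skew] at h2
  simpa [Module.Basis.coord_apply] using h2

include hbr hcent in
lemma repr_lie_left (n k : ℤ) (x : V) :
    b.repr ⁅b (some n), x⁆ (some k) = ((k - 2 * n : ℤ) : K) * b.repr x (some (k - n)) := by
  rw [← lie_skew, map_neg, Finsupp.neg_apply, repr_lie b hbr hcent]
  push_cast
  ring

include hbr in
lemma lie_e0 (m : ℤ) : ⁅b (some 0), b (some m)⁆ = (m : K) • b (some m) := by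
  rw [hbr]
  norm_num

variable (D : V →ₗ[K] V)
  (hD : ∀ x y : V, D ⁅x, y⁆ = ⁅D x, y⁆ + ⁅x, D y⁆)

include hbr hcent hD in
lemma key_rel (m k : ℤ) :
    ((m : K) - (k : K)) * b.repr (D (b (some m))) (some k)
      = ((2 * m - k : ℤ) : K) * b.repr (D (b (some 0))) (some (k - m)) := by
  have h := hD (b (some 0)) (b (some m))
  rw [lie_e0 b hbr] at h
  have h2 := congrArg (fun y => b.repr y (some k)) h
  simp only [map_smul, Finsupp.smul_apply, smul_eq_mul, map_add, Finsupp.add_apply] at h2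
  rw [repr_lie b hbr hcent, repr_lie_left b hbr hcent] at h2
  push_cast at h2 ⊢
  simp only [sub_zero, mul_zero, zero_mul] at h2
  linear_combination h2

include hbr hcent hD in
lemma repr_d1_off (m k : ℤ) (hk : k ≠ m) :
    b.repr (d1 b D m) (some k) = 0 := by
  have hkm : ((k : K) - (m : K)) ≠ 0 := by
    have : ((k - m : ℤ) : K) ≠ 0 := Int.cast_ne_zero.mpr (by omega)
    push_cast at this; exact this
  have hrel := key_rel b hbr hcent D hD m k
  rw [d1, map_sub, Finsupp.sub_apply, repr_lie b hbr hcent,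
    repr_v1_some b D (show k - m ≠ 0 by omega)]
  push_cast at hrel ⊢
  field_simp
  linear_combination -hrel

lemma decomp (m : ℤ) (x : V) (h : ∀ k : ℤ, k ≠ m → b.repr x (some k) = 0) :
    x = b.repr x (some m) • b (some m) + b.repr x none • b none := by
  apply b.repr.injective
  ext i
  simp only [map_add, map_smul, Module.Basis.repr_self, Finsupp.add_apply, Finsupp.smul_apply,
    Finsupp.single_apply, smul_eq_mul]
  cases i with
  | none => simp
  | some k =>
    by_cases hk : k = m
    · subst hk; simp
    · simp [h k hk, Ne.symm hk]

include hbr hcent hD in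
lemma d1_eq (n : ℤ) : d1 b D n = Ac b D n • b (some n) + Bc b D n • b none :=
  decomp b n _ (fun k hk => repr_d1_off b hbr hcent D hD n k hk)

include hbr hD in
lemma master (n m : ℤ) :
    ((m - n : ℤ) : K) • d1 b D (n + m)
        - (if m = -n then (1 / 12 : K) * ((n : K) ^ 3 - (n : K)) else 0)
          • (D (b none) - ⁅v1 b D, b none⁆)
      = ⁅d1 b D n, b (some m)⁆ + ⁅b (some n), d1 b D m⁆ := by
  have hjac := leibniz_lie (v1 b D) (b (some n)) (b (some m))
  have h1 : D ⁅b (some n), b (some m)⁆ - ⁅v1 b D, ⁅b (some n), b (some m)⁆⁆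
      = ⁅d1 b D n, b (some m)⁆ + ⁅b (some n), d1 b D m⁆ := by
    rw [hD, hjac]
    simp only [d1, sub_lie, lie_sub]
    abel
  rw [hbr n m, map_sub, map_smul, map_smul, lie_sub, lie_smul, lie_smul] at h1
  rw [← h1]
  simp only [d1, smul_sub]
  abel

include hbr hcent hD in
lemma pair (n m : ℤ) (hnm : n ≠ m) (h0 : n + m ≠ 0) :
    Ac b D (n + m) = Ac b D n + Ac b D m ∧ Bc b D (n + m) = 0 := by
  have hm := master b hbr D hD n m
  rw [if_neg (show ¬ m = -n by omega), zero_smul, sub_zero] at hm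
  rw [d1_eq b hbr hcent D hD n, d1_eq b hbr hcent D hD m] at hm
  have htn : ⁅b none, b (some m)⁆ = 0 := by rw [← lie_skew, hcent m, neg_zero]
  rw [add_lie, lie_add, smul_lie, smul_lie, lie_smul, lie_smul, htn, hcent n,
    smul_zero, smul_zero, add_zero, add_zero] at hm
  rw [hbr n m, if_neg (show ¬ m = -n by omega), zero_smul, sub_zero] at hm
  have hc : ((m - n : ℤ) : K) ≠ 0 := Int.cast_ne_zero.mpr (by omega)
  constructor
  · have h2 := congrArg (fun y => b.repr y (some (n + m))) hm
    simp only [map_smul, map_add, Finsupp.smul_apply, Finsupp.add_apply, smul_eq_mul,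
      Module.Basis.repr_self, Finsupp.single_apply, if_true, eq_self_iff_true] at h2
    apply mul_left_cancel₀ hc
    rw [show Ac b D (n + m) = b.repr (d1 b D (n + m)) (some (n + m)) from rfl]
    linear_combination h2
  · have h3 := congrArg (fun y => b.repr y none) hm
    simp only [map_smul, map_add, Finsupp.smul_apply, Finsupp.add_apply, smul_eq_mul,
      Module.Basis.repr_self, Finsupp.single_apply] at h3
    have : ((m - n : ℤ) : K) * Bc b D (n + m) = 0 := by
      unfold Bc
      simpa using h3
    exact (mul_eq_zero.mp this).resolve_left hc

include hbr hcent hD in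
lemma A_zero : Ac b D 0 = 0 := by
  have h := (pair b hbr hcent D hD 0 1 (by norm_num) (by norm_num)).1
  norm_num at h
  exact h

include hbr hcent hD in
lemma A_two : Ac b D 2 = 2 * Ac b D 1 := by
  have h3 := (pair b hbr hcent D hD 1 2 (by norm_num) (by norm_num)).1
  have h4 := (pair b hbr hcent D hD 1 3 (by norm_num) (by norm_num)).1
  have h5 := (pair b hbr hcent D hD 1 4 (by norm_num) (by norm_num)).1
  have h5' := (pair b hbr hcent D hD 2 3 (by norm_num) (by norm_num)).1
  norm_num at h3 h4 h5 h5'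
  linear_combination h4 + h5 - h5' 

include hbr hcent hD in
lemma A_negone : Ac b D (-1) = - Ac b D 1 := by
  have h := (pair b hbr hcent D hD (-1) 2 (by norm_num) (by norm_num)).1
  norm_num at h
  have h2 := A_two b hbr hcent D hD
  linear_combination -h - h2

include hbr hcent hD in
lemma A_all (n : ℤ) : Ac b D n = (n : K) * Ac b D 1 := by
  have hstep : ∀ n : ℤ, n ≠ 1 → n ≠ -1 → Ac b D (n + 1) = Ac b D n + Ac b D 1 :=
    fun n h1 h2 => (pair b hbr hcent D hD n 1 h1 (by omega)).1
  have hnat : ∀ n : ℕ, Ac b D (n : ℤ) = (n : K) * Ac b D 1 := by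
    intro n
    induction n with
    | zero => simpa using A_zero b hbr hcent D hD
    | succ k ih =>
      match k, ih with
      | 0, _ => norm_num
      | 1, _ =>
        norm_num
        exact A_two b hbr hcent D hD
      | (j+2), ih =>
        have h := hstep ((j : ℤ) + 2) (by omega) (by omega)
        push_cast at ih h ⊢
        rw [show ((j:ℤ) + 2 + 1) = ((j:ℤ) + 3) by ring] at h ⊢
        linear_combination h + ih
  obtain ⟨m, rfl | rfl⟩ := Int.eq_nat_or_neg n
  · exact_mod_cast hnat m
  · match m with
    | 0 => simpa using A_zero b hbr hcent D hD
    | (j+1) =>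
      have hp := (pair b hbr hcent D hD (-((j:ℤ)+1)) (j : ℤ) (by omega) (by omega)).1
      rw [show (-((j:ℤ)+1) + j) = -1 by ring] at hp
      rw [A_negone b hbr hcent D hD] at hp
      have hj := hnat j
      rw [hj] at hp
      push_cast at hp ⊢
      linear_combination -hp

include hbr hcent hD in
lemma B_ne (k : ℤ) (hk : k ≠ 0) : Bc b D k = 0 := by
  have h := (pair b hbr hcent D hD 0 k (Ne.symm hk) (by omega)).2
  simpa using h

include hbr hcent hD in
lemma d1_zero : d1 b D 0 = 0 := by
  have hm := master b hbr D hD 1 (-1)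
  rw [d1_eq b hbr hcent D hD 1, d1_eq b hbr hcent D hD (-1)] at hm
  have htn : ⁅b none, b (some (-1))⁆ = 0 := by rw [← lie_skew, hcent (-1), neg_zero]
  rw [add_lie, lie_add, smul_lie, smul_lie, lie_smul, lie_smul, htn, hcent 1,
    smul_zero, smul_zero, add_zero, add_zero] at hm
  rw [hbr 1 (-1)] at hm
  rw [show (1 + -1 : ℤ) = 0 by norm_num] at hm
  rw [if_pos rfl, show (1/12 : K) * (((1:ℤ):K)^3 - ((1:ℤ):K)) = 0 by norm_num] at hm
  simp only [zero_smul, sub_zero] at hm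
  rw [A_negone b hbr hcent D hD] at hm
  have hz : Ac b D 1 • ((-1 - 1 : ℤ) : K) • b (some 0)
      + (-Ac b D 1) • ((-1 - 1 : ℤ) : K) • b (some 0) = (0 : V) := by module
  have h3 := hm.trans hz
  rcases smul_eq_zero.mp h3 with h | h
  · norm_num at h
  · exact h

include hbr hcent hD in
lemma B_zero : Bc b D 0 = 0 := by
  rw [Bc, d1_zero b hbr hcent D hD]
  simp

include hbr hcent hD in
lemma D_some (n : ℤ) :
    D (b (some n)) = ⁅v1 b D + Ac b D 1 • b (some 0), b (some n)⁆ := by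
  have hB : Bc b D n = 0 := by
    rcases eq_or_ne n 0 with rfl | h
    · exact B_zero b hbr hcent D hD
    · exact B_ne b hbr hcent D hD n h
  have hd := d1_eq b hbr hcent D hD n
  rw [hB, zero_smul, add_zero, A_all b hbr hcent D hD n] at hd
  have h1 : D (b (some n)) = ⁅v1 b D, b (some n)⁆ + ((n : K) * Ac b D 1) • b (some n) := by
    rw [← hd, d1]
    abel
  rw [h1, add_lie, smul_lie, lie_e0 b hbr n, smul_smul, mul_comm ((n : K)) (Ac b D 1)]

include hbr hcent hD in
lemma D_t : D (b none) = ⁅v1 b D + Ac b D 1 • b (some 0), b none⁆ := by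
  have ht : b none = (-2 : K) • ⁅b (some 2), b (some (-2))⁆
      + (4 : K) • ⁅b (some 1), b (some (-1))⁆ := by
    rw [hbr 2 (-2), hbr 1 (-1), if_pos rfl, if_pos rfl,
      show (2 + -2 : ℤ) = 0 by norm_num, show (1 + -1 : ℤ) = 0 by norm_num]
    push_cast
    norm_num
    module
  have h2 := hD (b (some 2)) (b (some (-2)))
  rw [D_some b hbr hcent D hD 2, D_some b hbr hcent D hD (-2), ← leibniz_lie] at h2
  have h1 := hD (b (some 1)) (b (some (-1)))
  rw [D_some b hbr hcent D hD 1, D_some b hbr hcent D hD (-1), ← leibniz_lie] at h1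
  calc D (b none)
      = D ((-2 : K) • ⁅b (some 2), b (some (-2))⁆
          + (4 : K) • ⁅b (some 1), b (some (-1))⁆) := by rw [← ht]
    _ = (-2 : K) • D ⁅b (some 2), b (some (-2))⁆
          + (4 : K) • D ⁅b (some 1), b (some (-1))⁆ := by
        rw [map_add, map_smul, map_smul]
    _ = (-2 : K) • ⁅v1 b D + Ac b D 1 • b (some 0), ⁅b (some 2), b (some (-2))⁆⁆
          + (4 : K) • ⁅v1 b D + Ac b D 1 • b (some 0), ⁅b (some 1), b (some (-1))⁆⁆ := by
        rw [h2, h1]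
    _ = ⁅v1 b D + Ac b D 1 • b (some 0), (-2 : K) • ⁅b (some 2), b (some (-2))⁆
          + (4 : K) • ⁅b (some 1), b (some (-1))⁆⁆ := by
        rw [lie_add, lie_smul, lie_smul]
    _ = ⁅v1 b D + Ac b D 1 • b (some 0), b none⁆ := by rw [← ht]

end
end VirasoroH1

/-- `H^1(V, V) = 0`: every derivation of the Virasoro algebra is inner. -/
theorem virasoro_H1_adjoint_vanishes
    (K : Type*) [Field K] [CharZero K]
    (V : Type*) [LieRing V] [LieAlgebra K V]
    (b : Module.Basis (Option ℤ) K V)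
    -- `b (some n)` is `ê_n`, `b none` is the central element `t`
    (hbr : ∀ n m : ℤ, ⁅b (some n), b (some m)⁆
        = ((m - n : ℤ) : K) • b (some (n + m))
          - (if m = -n then (1 / 12 : K) * ((n : K) ^ 3 - (n : K)) else 0) • b none)
    (hcent : ∀ n : ℤ, ⁅b (some n), b none⁆ = 0) :
    ∀ D : V →ₗ[K] V, (∀ x y : V, D ⁅x, y⁆ = ⁅D x, y⁆ + ⁅x, D y⁆) →
      ∃ v : V, ∀ x : V, D x = ⁅v, x⁆ := by
  intro D hD
  refine ⟨VirasoroH1.v1 b D + VirasoroH1.Ac b D 1 • b (some 0), fun x => ?_⟩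
  have hmap : D = (LieAlgebra.ad K V
      (VirasoroH1.v1 b D + VirasoroH1.Ac b D 1 • b (some 0)) : V →ₗ[K] V) := by
    apply b.ext
    intro i
    cases i with
    | some n =>
      rw [LieAlgebra.ad_apply]
      exact VirasoroH1.D_some b hbr hcent D hD n
    | none =>
      rw [LieAlgebra.ad_apply]
      exact VirasoroH1.D_t b hbr hcent D hD
  exact (LinearMap.congr_fun hmap x).trans (by rw [LieAlgebra.ad_apply])
end
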